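/- arXiv:2306.04278 — 5 statements merged into one kernel-verified Lean document; each statement's English description precedes it below -/
import Mathlib

section
/- Assume the u_j are pairwise distinct. For n ≥ 1, let R_n = #{ 1 ≤ j ≤ n : u_j ≤ u_n } ∈ {1,…,n} be the rank of u_n among u_1, …, u_n. Then for every n ≥ 1, λ_{n+1} = (λ_n)_{S, R_n}, where S = ⊕ if s_n = +1 and S = ⊖ if s_n = −1. -/
open MeasureTheory

/-- `I(x,y) = (min(x,y), max(x,y)]`. -/
def gapInterval (x y : ℝ) : Set ℝ := Set.Ioc (min x y) (max x y)

/-- `i(x,y) = inf { j ≥ 1 : u_j ∈ I(x,y) } ∈ ℕ ∪ {∞}` (with `inf ∅ = ∞`). -/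
noncomputable def firstIdx (u : ℕ → ℝ) (x y : ℝ) : ℕ∞ :=
  sInf ((fun j : ℕ => (j : ℕ∞)) '' {j : ℕ | 1 ≤ j ∧ u j ∈ gapInterval x y})

/-- `x ≺ y` iff `i(x,y) < ∞` and `(y − x) · s_{i(x,y)} > 0`. -/
def Prec (u s : ℕ → ℝ) (x y : ℝ) : Prop :=
  ∃ j : ℕ, firstIdx u x y = (j : ℕ∞) ∧ (y - x) * s j > 0

/-- The value at position `i` (0-indexed) of the inflation `τ_{b,k}` of a permutation `τ` of
`{0,…,n−1}` at position `k`, with sign `b` (`true` = ⊕, `false` = ⊖): writing `j = τ(k)`,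
every value larger than `j` is increased by `1` and the entry `j` is replaced by the two
consecutive entries `j, j+1` (if `b`) or `j+1, j` (if `¬b`). -/
def inflVal {n : ℕ} (τ : Equiv.Perm (Fin n)) (b : Bool) (k : Fin n) (i : Fin (n + 1)) : ℕ :=
  let j : ℕ := τ k
  if h1 : (i : ℕ) < (k : ℕ) then
    (if (τ ⟨i, lt_trans h1 k.isLt⟩ : ℕ) ≤ j then (τ ⟨i, lt_trans h1 k.isLt⟩ : ℕ)
     else (τ ⟨i, lt_trans h1 k.isLt⟩ : ℕ) + 1)
  else if (i : ℕ) = (k : ℕ) then (if b then j else j + 1)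
  else if (i : ℕ) = (k : ℕ) + 1 then (if b then j + 1 else j)
  else
    (if (τ ⟨(i : ℕ) - 1, by omega⟩ : ℕ) ≤ j then (τ ⟨(i : ℕ) - 1, by omega⟩ : ℕ)
     else (τ ⟨(i : ℕ) - 1, by omega⟩ : ℕ) + 1)

/-- `ρ = τ_{b,k}`, i.e. `ρ` is the inflation of `τ` at position `k` with sign `b`. -/
def IsInflation {n : ℕ} (τ : Equiv.Perm (Fin n)) (b : Bool) (k : Fin n)
    (ρ : Equiv.Perm (Fin (n + 1))) : Prop :=
  ∀ i : Fin (n + 1), (ρ i : ℕ) = inflVal τ b k i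

lemma gapInterval_comm (x y : ℝ) : gapInterval x y = gapInterval y x := by
  unfold gapInterval; rw [min_comm, max_comm]

lemma firstIdx_comm (u : ℕ → ℝ) (x y : ℝ) : firstIdx u x y = firstIdx u y x := by
  unfold firstIdx; rw [gapInterval_comm]

lemma firstIdx_eq (u : ℕ → ℝ) (x y : ℝ) (m : ℕ) (hm : 1 ≤ m) (hmem : u m ∈ gapInterval x y)
    (hmin : ∀ j, 1 ≤ j → u j ∈ gapInterval x y → m ≤ j) : firstIdx u x y = (m : ℕ∞) := by
  apply le_antisymm
  · exact sInf_le ⟨m, ⟨hm, hmem⟩, rfl⟩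
  · apply le_sInf
    rintro a ⟨j, ⟨hj1, hj2⟩, rfl⟩
    simp only []
    exact_mod_cast hmin j hj1 hj2

lemma prec_iff (u s : ℕ → ℝ) (x y : ℝ) (m : ℕ) (h : firstIdx u x y = (m : ℕ∞)) :
    Prec u s x y ↔ (y - x) * s m > 0 := by
  constructor
  · rintro ⟨j, hj, hjs⟩
    have : (m : ℕ∞) = (j : ℕ∞) := h ▸ hj
    rwa [Nat.cast_inj.mp this]
  · intro hp; exact ⟨m, h, hp⟩

lemma not_prec_self (u s : ℕ → ℝ) (x : ℝ) : ¬ Prec u s x x := by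
  rintro ⟨j, _, hj⟩
  simp at hj

lemma sign_pos_iff {a t : ℝ} (ha : 0 < a) (ht : t = 1 ∨ t = -1) : 0 < a * t ↔ t = 1 := by
  rcases ht with h | h <;> subst h <;> constructor <;> intro h' <;>
    first | linarith | norm_num at h' ⊢ <;> linarith

lemma sign_neg_iff {a t : ℝ} (ha : a < 0) (ht : t = 1 ∨ t = -1) : 0 < a * t ↔ t = -1 := by
  rcases ht with h | h <;> subst h <;> constructor <;> intro h' <;>
    first | linarith | norm_num at h' ⊢ <;> linarith

lemma perm_val_eq_card {m : ℕ} (f : Fin m → Fin m) (hf : Function.Injective f) (i : Fin m) :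
    (f i : ℕ) = (Finset.univ.filter fun i' => f i' < f i).card := by
  have hsurj : Function.Surjective f := Finite.surjective_of_injective hf
  have h1 : (Finset.univ.filter fun i' => f i' < f i).card
      = (Finset.univ.filter fun x => x < f i).card := by
    apply Finset.card_bij (fun a _ => f a)
    · intro a ha; simp at ha ⊢; exact ha
    · intro a _ b _ hab; exact hf hab
    · intro x hx; simp at hx; obtain ⟨a, ha⟩ := hsurj x; exact ⟨a, by simp [ha, hx]⟩
  rw [h1]
  have : (Finset.univ.filter (fun x => x < f i)) = Finset.Iio (f i) := by ext x; simp
  rw [this]; simp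

lemma filter_lt_iff {m : ℕ} (f : Fin m → ℝ) (hf : StrictMono f) (c : ℝ) (i : Fin m) :
    f i < c ↔ (i : ℕ) < (Finset.univ.filter (fun i' => f i' < c)).card := by
  constructor
  · intro h
    have hsub : Finset.Iic i ⊆ Finset.univ.filter (fun i' => f i' < c) := by
      intro x hx
      simp at hx ⊢
      exact lt_of_le_of_lt (hf.monotone hx) h
    have := Finset.card_le_card hsub
    simp at this
    omega
  · intro h
    by_contra hc
    push_neg at hc
    have hsub : Finset.univ.filter (fun i' => f i' < c) ⊆ Finset.Iio i := by
      intro x hx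
      simp at hx ⊢
      by_contra hxi
      push_neg at hxi
      exact absurd (lt_of_le_of_lt (hf.monotone hxi) hx) (not_lt.mpr hc)
    have := Finset.card_le_card hsub
    simp at this
    omega

lemma inflVal_lt {n : ℕ} (τ : Equiv.Perm (Fin n)) (b : Bool) (k : Fin n) (i : Fin (n+1)) :
    inflVal τ b k i < n + 1 := by
  simp only [inflVal]
  split_ifs <;>
    first
      | exact Nat.lt_succ_of_lt (Fin.is_lt _)
      | exact Nat.succ_lt_succ (Fin.is_lt _)

lemma inflVal_lt_case {n : ℕ} (τ : Equiv.Perm (Fin n)) (b : Bool) (k : Fin n) (i : Fin (n+1))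
    (h : (i:ℕ) < (k:ℕ)) :
    inflVal τ b k i = (if (τ ⟨(i:ℕ), lt_trans h k.isLt⟩ : ℕ) ≤ (τ k : ℕ)
      then (τ ⟨(i:ℕ), lt_trans h k.isLt⟩ : ℕ) else (τ ⟨(i:ℕ), lt_trans h k.isLt⟩ : ℕ) + 1) := by
  simp only [inflVal]
  rw [dif_pos h]

lemma inflVal_eq_case {n : ℕ} (τ : Equiv.Perm (Fin n)) (b : Bool) (k : Fin n) (i : Fin (n+1))
    (h : (i:ℕ) = (k:ℕ)) :
    inflVal τ b k i = (if b then (τ k : ℕ) else (τ k : ℕ) + 1) := by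
  simp only [inflVal]
  rw [dif_neg (by omega), if_pos h]

lemma inflVal_eq1_case {n : ℕ} (τ : Equiv.Perm (Fin n)) (b : Bool) (k : Fin n) (i : Fin (n+1))
    (h : (i:ℕ) = (k:ℕ) + 1) :
    inflVal τ b k i = (if b then (τ k : ℕ) + 1 else (τ k : ℕ)) := by
  simp only [inflVal]
  rw [dif_neg (by omega), if_neg (by omega), if_pos h]

lemma inflVal_gt_case {n : ℕ} (τ : Equiv.Perm (Fin n)) (b : Bool) (k : Fin n) (i : Fin (n+1))
    (h : (k:ℕ) + 1 < (i:ℕ)) :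
    inflVal τ b k i = (if (τ ⟨(i:ℕ) - 1, by have := i.isLt; omega⟩ : ℕ) ≤ (τ k : ℕ)
      then (τ ⟨(i:ℕ) - 1, by have := i.isLt; omega⟩ : ℕ)
      else (τ ⟨(i:ℕ) - 1, by have := i.isLt; omega⟩ : ℕ) + 1) := by
  simp only [inflVal]
  rw [dif_neg (by omega), if_neg (by omega), if_neg (by omega)]

lemma main_aux
    (u s : ℕ → ℝ)
    (hu : ∀ j, 1 ≤ j → u j ∈ Set.Ioo (0:ℝ) 1)
    (hs : ∀ j, 1 ≤ j → s j = 1 ∨ s j = -1)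
    (hdist : ∀ j k, 1 ≤ j → 1 ≤ k → u j = u k → j = k)
    (lam : (n : ℕ) → Equiv.Perm (Fin n)) (e : (n : ℕ) → Fin n → ℝ)
    (he1 : ∀ n, 1 ≤ n → StrictMono (e n))
    (he2 : ∀ n, 1 ≤ n → Set.range (e n) =
      insert (0:ℝ) {x : ℝ | ∃ j, 1 ≤ j ∧ j ≤ n - 1 ∧ u j = x})
    (hlam : ∀ n, 1 ≤ n → ∀ j k : Fin n,
      (lam n j < lam n k ↔ Prec u s (e n j) (e n k)))
    (n : ℕ) (hn : 1 ≤ n) (b : Bool) (hb : s n = if b then 1 else -1)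
    (hR : ((Finset.Icc 1 n).filter (fun j => u j ≤ u n)).card - 1 < n) :
    IsInflation (lam n) b
      ⟨((Finset.Icc 1 n).filter (fun j => u j ≤ u n)).card - 1, hR⟩ (lam (n + 1)) := by
  classical
  have hun0 : (0:ℝ) < u n := (hu n hn).1
  set R : ℕ := ((Finset.Icc 1 n).filter (fun j => u j ≤ u n)).card with hRdef
  have hR1 : 1 ≤ R := by
    have hmem : n ∈ (Finset.Icc 1 n).filter (fun j => u j ≤ u n) := by
      simp [Finset.mem_filter, Finset.mem_Icc, hn]
    have := Finset.card_pos.mpr ⟨n, hmem⟩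
    omega
  set k : ℕ := R - 1 with hkdef
  have hkn : k < n := hR
  have hkR : k + 1 = R := by omega
  have hRn1 : R < n + 1 := by omega
  set B : Finset ℕ := (Finset.Icc 1 (n-1)).filter (fun j => u j < u n) with hBdef
  have hnB : n ∉ B := by
    intro hmem
    simp only [hBdef, Finset.mem_filter, Finset.mem_Icc] at hmem
    omega
  have hAB : (Finset.Icc 1 n).filter (fun j => u j ≤ u n) = insert n B := by
    ext j
    simp only [hBdef, Finset.mem_filter, Finset.mem_Icc, Finset.mem_insert]
    constructor
    · rintro ⟨⟨hj1, hj2⟩, hj3⟩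
      by_cases hjn : j = n
      · exact Or.inl hjn
      · right
        have hne : u j ≠ u n := fun h => hjn (hdist j n hj1 hn h)
        exact ⟨⟨hj1, by omega⟩, lt_of_le_of_ne hj3 hne⟩
    · rintro (rfl | ⟨⟨hj1, hj2⟩, hj3⟩)
      · exact ⟨⟨by omega, le_refl _⟩, le_refl _⟩
      · exact ⟨⟨hj1, by omega⟩, hj3.le⟩
  have hcardA : R = B.card + 1 := by
    rw [hRdef, hAB, Finset.card_insert_of_notMem hnB]
  -- the image of the part of E_m below u_n
  have himg : ∀ m : ℕ, 1 ≤ m → n - 1 ≤ m - 1 → m - 1 ≤ n →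
      (Finset.univ.filter (fun i : Fin m => e m i < u n)).image (e m)
        = insert (0:ℝ) (B.image u) := by
    intro m hm1 hlb hub
    ext x
    simp only [Finset.mem_image, Finset.mem_filter, Finset.mem_univ, true_and,
      Finset.mem_insert]
    constructor
    · rintro ⟨i, hi, rfl⟩
      have hmem : e m i ∈ Set.range (e m) := ⟨i, rfl⟩
      rw [he2 m hm1] at hmem
      rcases hmem with h0 | ⟨j, hj1, hj2, hj3⟩
      · exact Or.inl h0
      · right
        have hjn : j ≠ n := by
          intro h; subst h; rw [hj3] at hi; exact lt_irrefl _ hi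
        refine ⟨j, ?_, hj3⟩
        simp only [hBdef, Finset.mem_filter, Finset.mem_Icc]
        exact ⟨⟨hj1, by omega⟩, by rw [hj3]; exact hi⟩
    · rintro (rfl | ⟨j, hjB, rfl⟩)
      · have h0r : (0:ℝ) ∈ Set.range (e m) := by
          rw [he2 m hm1]; exact Set.mem_insert _ _
        obtain ⟨i, hi⟩ := h0r
        exact ⟨i, by rw [hi]; exact hun0, hi⟩
      · simp only [hBdef, Finset.mem_filter, Finset.mem_Icc] at hjB
        obtain ⟨⟨hj1, hj2⟩, hjlt⟩ := hjB
        have hjr : u j ∈ Set.range (e m) := by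
          rw [he2 m hm1]; right; exact ⟨j, hj1, by omega, rfl⟩
        obtain ⟨i, hi⟩ := hjr
        exact ⟨i, by rw [hi]; exact hjlt, hi⟩
  have hcardS : ∀ m : ℕ, 1 ≤ m → n - 1 ≤ m - 1 → m - 1 ≤ n →
      (Finset.univ.filter (fun i : Fin m => e m i < u n)).card = R := by
    intro m hm1 hlb hub
    have hinj : Function.Injective (e m) := (he1 m hm1).injective
    have h1 := Finset.card_image_of_injective
      (Finset.univ.filter (fun i : Fin m => e m i < u n)) hinj
    rw [← h1, himg m hm1 hlb hub]
    have h0nB : (0:ℝ) ∉ B.image u := by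
      simp only [Finset.mem_image, hBdef, Finset.mem_filter, Finset.mem_Icc]
      rintro ⟨j, ⟨⟨hj1, _⟩, _⟩, hj0⟩
      exact absurd hj0 (ne_of_gt (hu j hj1).1)
    rw [Finset.card_insert_of_notMem h0nB, Finset.card_image_of_injOn]
    · omega
    · intro a ha c hc hac
      simp only [hBdef, Finset.mem_coe, Finset.mem_filter, Finset.mem_Icc] at ha hc
      exact hdist a c ha.1.1 hc.1.1 hac
  have hcn : ∀ i : Fin n, e n i < u n ↔ (i:ℕ) < R := by
    intro i
    rw [filter_lt_iff (e n) (he1 n hn) (u n) i, hcardS n hn (by omega) (by omega)]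
  have hcn1 : ∀ i : Fin (n+1), e (n+1) i < u n ↔ (i:ℕ) < R := by
    intro i
    rw [filter_lt_iff (e (n+1)) (he1 (n+1) (by omega)) (u n) i,
      hcardS (n+1) (by omega) (by omega) (by omega)]
  have hmid : e (n+1) ⟨R, hRn1⟩ = u n := by
    have hur : u n ∈ Set.range (e (n+1)) := by
      rw [he2 (n+1) (by omega)]; right; exact ⟨n, hn, by omega, rfl⟩
    obtain ⟨i0, hi0⟩ := hur
    have h1 : ¬ ((i0:ℕ) < R) := by
      intro h
      have := (hcn1 i0).mpr h
      rw [hi0] at this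
      exact lt_irrefl _ this
    have h2 : ¬ (R < (i0:ℕ)) := by
      intro h
      have hlt : e (n+1) ⟨R, hRn1⟩ < e (n+1) i0 := he1 (n+1) (by omega) h
      rw [hi0] at hlt
      have h5 := (hcn1 ⟨R, hRn1⟩).mp hlt
      simp at h5
    have : i0 = ⟨R, hRn1⟩ := Fin.ext (show (i0:ℕ) = R by omega)
    rw [← this, hi0]
  -- the compatible enumeration
  set F : Fin n → ℝ := fun i =>
    e (n+1) ⟨if (i:ℕ) < R then (i:ℕ) else (i:ℕ)+1,
      by have := i.isLt; split_ifs <;> omega⟩ with hFdef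
  have hFmono : StrictMono F := by
    intro a c hac
    have hac' : (a:ℕ) < (c:ℕ) := hac
    apply he1 (n+1) (by omega)
    show (⟨_, _⟩ : Fin (n+1)) < ⟨_, _⟩
    rw [Fin.mk_lt_mk]
    split_ifs <;> omega
  set s0 : Finset ℝ := Finset.univ.image (e n) with hs0def
  have hs0card : s0.card = n := by
    rw [hs0def, Finset.card_image_of_injective _ (he1 n hn).injective]
    simp
  have hens0 : ∀ i, e n i ∈ s0 := fun i => Finset.mem_image_of_mem _ (Finset.mem_univ i)
  have hranges0 : ∀ x : ℝ, x ∈ Set.range (e n) → x ∈ s0 := by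
    rintro x ⟨a, ha⟩
    rw [hs0def]
    simp only [Finset.mem_image, Finset.mem_univ, true_and]
    exact ⟨a, ha⟩
  have hFs0 : ∀ i : Fin n, F i ∈ s0 := by
    intro i
    have hp : F i ∈ Set.range (e (n+1)) := ⟨_, rfl⟩
    have hpne : F i ≠ u n := by
      intro hcon
      rw [← hmid] at hcon
      have h3 := (he1 (n+1) (by omega)).injective hcon
      have h4 : (if (i:ℕ) < R then (i:ℕ) else (i:ℕ)+1) = R := congrArg Fin.val h3
      have := i.isLt
      split_ifs at h4 <;> omega
    rw [he2 (n+1) (by omega)] at hp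
    rcases hp with h0 | ⟨j, hj1, hj2, hj3⟩
    · apply hranges0
      rw [he2 n hn, h0]
      exact Set.mem_insert _ _
    · have hjn : j ≠ n := fun h => hpne (by rw [← hj3, h])
      apply hranges0
      rw [he2 n hn]
      right
      exact ⟨j, hj1, by omega, hj3⟩
  have hFeq : F = e n := by
    rw [Finset.orderEmbOfFin_unique hs0card hFs0 hFmono,
        Finset.orderEmbOfFin_unique hs0card hens0 (he1 n hn)]
  have hlow : ∀ i : Fin n, (i:ℕ) < R →
      e (n+1) ⟨(i:ℕ), lt_trans i.isLt (Nat.lt_succ_self n)⟩ = e n i := by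
    intro i hi
    rw [← congrFun hFeq i, hFdef]
    congr 1
    exact Fin.ext (by simp [hi])
  have hhigh : ∀ i : Fin n, R ≤ (i:ℕ) →
      e (n+1) ⟨(i:ℕ)+1, Nat.succ_lt_succ i.isLt⟩ = e n i := by
    intro i hi
    rw [← congrFun hFeq i, hFdef]
    congr 1
    exact Fin.ext (by simp only [if_neg (show ¬((i:ℕ) < R) by omega)])
  set K : Fin n := ⟨k, hkn⟩ with hKdef
  have hvltun : e n K < u n := (hcn K).mpr (show k < R by omega)
  have hlev : ∀ j, 1 ≤ j → j ≤ n - 1 → u j < u n → u j ≤ e n K := by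
    intro j hj1 hj2 hjlt
    have hjr : u j ∈ Set.range (e n) := by
      rw [he2 n hn]; right; exact ⟨j, hj1, hj2, rfl⟩
    obtain ⟨a, ha⟩ := hjr
    have haR : (a:ℕ) < R := (hcn a).mp (by rw [ha]; exact hjlt)
    rw [← ha]
    exact (he1 n hn).monotone (Fin.le_def.mpr (show (a:ℕ) ≤ k by omega))
  have hnin : u n ∉ Set.range (e n) := by
    intro hmem
    rw [he2 n hn, Set.mem_insert_iff, Set.mem_setOf_eq] at hmem
    rcases hmem with h0 | ⟨j, hj1, hj2, hj3⟩
    · exact absurd h0 (ne_of_gt hun0)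
    · have := hdist j n hj1 hn hj3
      omega
  have hvu : firstIdx u (e n K) (u n) = (n : ℕ∞) := by
    apply firstIdx_eq u _ _ n hn
    · unfold gapInterval
      rw [min_eq_left hvltun.le, max_eq_right hvltun.le]
      exact ⟨hvltun, le_refl _⟩
    · intro j hj1 hjmem
      unfold gapInterval at hjmem
      rw [min_eq_left hvltun.le, max_eq_right hvltun.le] at hjmem
      by_contra hcon
      push_neg at hcon
      have hne : u j ≠ u n := fun h => by have := hdist j n hj1 hn h; omega
      have hjv : u j ≤ e n K := hlev j hj1 (by omega) (lt_of_le_of_ne hjmem.2 hne)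
      exact absurd hjmem.1 (not_lt.mpr hjv)
  have hPvu : Prec u s (e n K) (u n) ↔ b = true := by
    rw [prec_iff u s _ _ n hvu, gt_iff_lt, sign_pos_iff (by linarith) (hs n hn), hb]
    cases b <;> norm_num
  have hPuv : Prec u s (u n) (e n K) ↔ b = false := by
    rw [prec_iff u s _ _ n (by rw [firstIdx_comm]; exact hvu), gt_iff_lt,
      sign_neg_iff (by linarith) (hs n hn), hb]
    cases b <;> norm_num
  have hG2 : ∀ a : Fin n, (a:ℕ) ≠ k →
      (Prec u s (e n a) (u n) ↔ Prec u s (e n a) (e n K)) ∧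
      (Prec u s (u n) (e n a) ↔ Prec u s (e n K) (e n a)) := by
    intro a hak
    rcases lt_or_gt_of_ne hak with hlt | hgt
    · have hzv : e n a < e n K := he1 n hn (Fin.lt_def.mpr hlt)
      have hzun : e n a < u n := lt_trans hzv hvltun
      have hKmem : e n K ∈ insert (0:ℝ) {x : ℝ | ∃ j, 1 ≤ j ∧ j ≤ n - 1 ∧ u j = x} := by
        rw [← he2 n hn]; exact ⟨K, rfl⟩
      rw [Set.mem_insert_iff, Set.mem_setOf_eq] at hKmem
      rcases hKmem with h0 | ⟨j', hj'1, hj'2, hj'3⟩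
      · exfalso
        have hz0 : (0:ℝ) ≤ e n a := by
          have hamem : e n a ∈ insert (0:ℝ) {x : ℝ | ∃ j, 1 ≤ j ∧ j ≤ n - 1 ∧ u j = x} := by
            rw [← he2 n hn]; exact ⟨a, rfl⟩
          rw [Set.mem_insert_iff, Set.mem_setOf_eq] at hamem
          rcases hamem with h | ⟨j, hj1, _, hj3⟩
          · rw [h]
          · rw [← hj3]; exact (hu j hj1).1.le
        rw [h0] at hzv; linarith
      · have hQ : ∃ m, 1 ≤ m ∧ u m ∈ Set.Ioc (e n a) (e n K) :=
          ⟨j', hj'1, by rw [hj'3]; exact ⟨hzv, le_refl _⟩⟩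
        set m := Nat.find hQ with hmdef
        obtain ⟨hm1, hmem⟩ := Nat.find_spec hQ
        have hmn : m ≤ n - 1 :=
          le_trans (Nat.find_min' hQ ⟨hj'1, by rw [hj'3]; exact ⟨hzv, le_refl _⟩⟩) hj'2
        have hfzv : firstIdx u (e n a) (e n K) = (m : ℕ∞) := by
          apply firstIdx_eq u _ _ m hm1
          · unfold gapInterval; rw [min_eq_left hzv.le, max_eq_right hzv.le]; exact hmem
          · intro j hj1 hjm
            unfold gapInterval at hjm; rw [min_eq_left hzv.le, max_eq_right hzv.le] at hjm
            exact Nat.find_min' hQ ⟨hj1, hjm⟩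
        have hfzu : firstIdx u (e n a) (u n) = (m : ℕ∞) := by
          apply firstIdx_eq u _ _ m hm1
          · unfold gapInterval; rw [min_eq_left hzun.le, max_eq_right hzun.le]
            exact ⟨hmem.1, le_trans hmem.2 hvltun.le⟩
          · intro j hj1 hjm
            unfold gapInterval at hjm; rw [min_eq_left hzun.le, max_eq_right hzun.le] at hjm
            by_contra hcon
            push_neg at hcon
            have hne : u j ≠ u n := fun h => by have := hdist j n hj1 hn h; omega
            have hjv : u j ≤ e n K := hlev j hj1 (by omega) (lt_of_le_of_ne hjm.2 hne)
            exact absurd (Nat.find_min' hQ ⟨hj1, hjm.1, hjv⟩) (by omega)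
        have hsm := hs m hm1
        constructor
        · rw [prec_iff u s _ _ m hfzu, prec_iff u s _ _ m hfzv, gt_iff_lt, gt_iff_lt,
            sign_pos_iff (by linarith) hsm, sign_pos_iff (by linarith) hsm]
        · rw [prec_iff u s _ _ m (by rw [firstIdx_comm]; exact hfzu),
            prec_iff u s _ _ m (by rw [firstIdx_comm]; exact hfzv), gt_iff_lt, gt_iff_lt,
            sign_neg_iff (by linarith) hsm, sign_neg_iff (by linarith) hsm]
    · have hzgt : u n < e n a := by
        have h1 : ¬ (e n a < u n) := by
          rw [hcn a]; omega
        have h2 : e n a ≠ u n := fun h => hnin (h ▸ ⟨a, rfl⟩)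
        exact lt_of_le_of_ne (not_lt.mp h1) (Ne.symm h2)
      have hvz : e n K < e n a := lt_trans hvltun hzgt
      have hamem : e n a ∈ insert (0:ℝ) {x : ℝ | ∃ j, 1 ≤ j ∧ j ≤ n - 1 ∧ u j = x} := by
        rw [← he2 n hn]; exact ⟨a, rfl⟩
      rw [Set.mem_insert_iff, Set.mem_setOf_eq] at hamem
      rcases hamem with h0 | ⟨j', hj'1, hj'2, hj'3⟩
      · exfalso; rw [h0] at hzgt; linarith
      · have hQ : ∃ m, 1 ≤ m ∧ u m ∈ Set.Ioc (e n K) (e n a) :=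
          ⟨j', hj'1, by rw [hj'3]; exact ⟨hvz, le_refl _⟩⟩
        set m := Nat.find hQ with hmdef
        obtain ⟨hm1, hmem⟩ := Nat.find_spec hQ
        have hmn : m ≤ n - 1 :=
          le_trans (Nat.find_min' hQ ⟨hj'1, by rw [hj'3]; exact ⟨hvz, le_refl _⟩⟩) hj'2
        have hmgtu : u n < u m := by
          by_contra hcon
          push_neg at hcon
          have hne : u m ≠ u n := fun h => by have := hdist m n hm1 hn h; omega
          have := hlev m hm1 hmn (lt_of_le_of_ne hcon hne)
          exact absurd hmem.1 (not_lt.mpr this)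
        have hfvz : firstIdx u (e n K) (e n a) = (m : ℕ∞) := by
          apply firstIdx_eq u _ _ m hm1
          · unfold gapInterval; rw [min_eq_left hvz.le, max_eq_right hvz.le]; exact hmem
          · intro j hj1 hjm
            unfold gapInterval at hjm; rw [min_eq_left hvz.le, max_eq_right hvz.le] at hjm
            exact Nat.find_min' hQ ⟨hj1, hjm⟩
        have hfuz : firstIdx u (u n) (e n a) = (m : ℕ∞) := by
          apply firstIdx_eq u _ _ m hm1
          · unfold gapInterval; rw [min_eq_left hzgt.le, max_eq_right hzgt.le]
            exact ⟨hmgtu, hmem.2⟩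
          · intro j hj1 hjm
            unfold gapInterval at hjm; rw [min_eq_left hzgt.le, max_eq_right hzgt.le] at hjm
            exact Nat.find_min' hQ ⟨hj1, lt_trans hvltun hjm.1, hjm.2⟩
        have hsm := hs m hm1
        constructor
        · rw [prec_iff u s _ _ m (by rw [firstIdx_comm]; exact hfuz),
            prec_iff u s _ _ m (by rw [firstIdx_comm]; exact hfvz), gt_iff_lt, gt_iff_lt,
            sign_neg_iff (by linarith) hsm, sign_neg_iff (by linarith) hsm]
        · rw [prec_iff u s _ _ m hfuz, prec_iff u s _ _ m hfvz, gt_iff_lt, gt_iff_lt,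
            sign_pos_iff (by linarith) hsm, sign_pos_iff (by linarith) hsm]
  have hprec_en : ∀ a a' : Fin n,
      Prec u s (e n a') (e n a) ↔ ((lam n) a' : ℕ) < ((lam n) a : ℕ) := by
    intro a a'
    rw [← hlam n hn a' a]
    exact Fin.lt_def
  have hτne : ∀ a : Fin n, (a:ℕ) ≠ k → ((lam n) a : ℕ) ≠ ((lam n) K : ℕ) := by
    intro a hak h
    exact hak (congrArg Fin.val ((lam n).injective (Fin.ext h)))
  have hval_out : ∀ i : Fin (n+1), (i:ℕ) ≠ k → (i:ℕ) ≠ k + 1 →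
      ∃ a : Fin n, (a:ℕ) ≠ k ∧
        inflVal (lam n) b K i
          = (if ((lam n) a : ℕ) ≤ ((lam n) K : ℕ) then ((lam n) a : ℕ)
             else ((lam n) a : ℕ) + 1) ∧
        e (n+1) i = e n a := by
    intro i h1 h2
    by_cases hik : (i:ℕ) < k
    · refine ⟨⟨(i:ℕ), by omega⟩, by simp; omega, ?_, ?_⟩
      · rw [inflVal_lt_case (lam n) b K i (show (i:ℕ) < (K:ℕ) from hik)]
      · rw [← hlow ⟨(i:ℕ), by omega⟩ (by simp; omega)]
    · have hik2 : k + 1 < (i:ℕ) := by omega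
      refine ⟨⟨(i:ℕ) - 1, by have := i.isLt; omega⟩, by simp; omega, ?_, ?_⟩
      · rw [inflVal_gt_case (lam n) b K i (show (K:ℕ) + 1 < (i:ℕ) from hik2)]
      · rw [← hhigh ⟨(i:ℕ) - 1, by have := i.isLt; omega⟩ (by simp; omega)]
        congr 1
        exact Fin.ext (by simp; omega)
  have hval_k : ∀ i : Fin (n+1), (i:ℕ) = k →
      inflVal (lam n) b K i = (if b then ((lam n) K : ℕ) else ((lam n) K : ℕ) + 1) ∧
      e (n+1) i = e n K := by
    intro i hi
    refine ⟨inflVal_eq_case (lam n) b K i hi, ?_⟩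
    rw [← hlow K (show (K:ℕ) < R from show k < R by omega)]
    congr 1
    exact Fin.ext hi
  have hval_k1 : ∀ i : Fin (n+1), (i:ℕ) = k + 1 →
      inflVal (lam n) b K i = (if b then ((lam n) K : ℕ) + 1 else ((lam n) K : ℕ)) ∧
      e (n+1) i = u n := by
    intro i hi
    refine ⟨inflVal_eq1_case (lam n) b K i hi, ?_⟩
    rw [← hmid]
    congr 1
    exact Fin.ext (show (i:ℕ) = R by omega)
  have hiff : ∀ i i' : Fin (n+1),
      inflVal (lam n) b K i' < inflVal (lam n) b K i ↔
        Prec u s (e (n+1) i') (e (n+1) i) := by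
    intro i i'
    by_cases hi1 : (i:ℕ) = k
    · obtain ⟨hv1, hv2⟩ := hval_k i hi1
      by_cases hi'1 : (i':ℕ) = k
      · obtain ⟨hw1, hw2⟩ := hval_k i' hi'1
        rw [hv1, hv2, hw1, hw2]
        constructor
        · intro h; exact absurd h (lt_irrefl _)
        · intro h; exact absurd h (not_prec_self u s _)
      · by_cases hi'2 : (i':ℕ) = k + 1
        · obtain ⟨hw1, hw2⟩ := hval_k1 i' hi'2
          rw [hv1, hv2, hw1, hw2, hPuv]
          cases b <;> simp
        · obtain ⟨a, hak, hw1, hw2⟩ := hval_out i' hi'1 hi'2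
          rw [hv1, hv2, hw1, hw2, hprec_en K a]
          have := hτne a hak
          split_ifs <;> omega
    · by_cases hi2 : (i:ℕ) = k + 1
      · obtain ⟨hv1, hv2⟩ := hval_k1 i hi2
        by_cases hi'1 : (i':ℕ) = k
        · obtain ⟨hw1, hw2⟩ := hval_k i' hi'1
          rw [hv1, hv2, hw1, hw2, hPvu]
          cases b <;> simp
        · by_cases hi'2 : (i':ℕ) = k + 1
          · obtain ⟨hw1, hw2⟩ := hval_k1 i' hi'2
            rw [hv1, hv2, hw1, hw2]
            constructor
            · intro h; exact absurd h (lt_irrefl _)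
            · intro h; exact absurd h (not_prec_self u s _)
          · obtain ⟨a, hak, hw1, hw2⟩ := hval_out i' hi'1 hi'2
            rw [hv1, hv2, hw1, hw2, (hG2 a hak).1, hprec_en K a]
            have := hτne a hak
            split_ifs <;> omega
      · obtain ⟨a, hak, hv1, hv2⟩ := hval_out i hi1 hi2
        by_cases hi'1 : (i':ℕ) = k
        · obtain ⟨hw1, hw2⟩ := hval_k i' hi'1
          rw [hv1, hv2, hw1, hw2, hprec_en a K]
          have := hτne a hak
          split_ifs <;> omega
        · by_cases hi'2 : (i':ℕ) = k + 1
          · obtain ⟨hw1, hw2⟩ := hval_k1 i' hi'2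
            rw [hv1, hv2, hw1, hw2, (hG2 a hak).2, hprec_en a K]
            have := hτne a hak
            split_ifs <;> omega
          · obtain ⟨a', hak', hw1, hw2⟩ := hval_out i' hi'1 hi'2
            rw [hv1, hv2, hw1, hw2, hprec_en a a']
            split_ifs <;> omega
  have hbound : ∀ i : Fin (n+1), inflVal (lam n) b K i < n + 1 :=
    fun i => inflVal_lt (lam n) b K i
  have hginj : Function.Injective
      (fun i : Fin (n+1) => (⟨inflVal (lam n) b K i, hbound i⟩ : Fin (n+1))) := by
    intro x y hxy
    have hval : inflVal (lam n) b K x = inflVal (lam n) b K y :=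
      congrArg Fin.val hxy
    by_contra hne
    have hlamne : lam (n+1) x ≠ lam (n+1) y := fun h => hne ((lam (n+1)).injective h)
    rcases lt_or_gt_of_ne hlamne with h | h
    · have := (hiff y x).mpr ((hlam (n+1) (by omega) x y).mp h)
      omega
    · have := (hiff x y).mpr ((hlam (n+1) (by omega) y x).mp h)
      omega
  intro i
  have h1 : ((lam (n+1)) i : ℕ)
      = (Finset.univ.filter fun i' => lam (n+1) i' < lam (n+1) i).card :=
    perm_val_eq_card (fun i' => lam (n+1) i') (fun x y h => (lam (n+1)).injective h) i
  have h2 : inflVal (lam n) b K i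
      = (Finset.univ.filter fun i' =>
          (⟨inflVal (lam n) b K i', hbound i'⟩ : Fin (n+1))
            < ⟨inflVal (lam n) b K i, hbound i⟩).card :=
    perm_val_eq_card (fun i' => (⟨inflVal (lam n) b K i', hbound i'⟩ : Fin (n+1))) hginj i
  have hfe : (Finset.univ.filter fun i' => lam (n+1) i' < lam (n+1) i)
      = (Finset.univ.filter fun i' =>
          (⟨inflVal (lam n) b K i', hbound i'⟩ : Fin (n+1))
            < ⟨inflVal (lam n) b K i, hbound i⟩) := by
    apply Finset.filter_congr
    intro x _
    rw [hlam (n+1) (by omega) x i, ← hiff i x, Fin.mk_lt_mk]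
  rw [h1, hfe]
  exact h2.symm


/-- assume the `u_j` pairwise distinct, and let `λ_n = Perm(E_n, <, ≺)` where
`E_n = {0, u_1, …, u_{n−1}}` (here `lam n : Equiv.Perm (Fin n)` is 0-indexed and `e n` is the
increasing enumeration of `E_n`). Let `R_n` be the rank of `u_n` among `u_1, …, u_n`. Then
`λ_{n+1} = (λ_n)_{S, R_n}` where `S = ⊕` if `s_n = +1` and `S = ⊖` if `s_n = −1`. -/
theorem perm_recursion_inflation
    (u s : ℕ → ℝ)
    (hu : ∀ j, 1 ≤ j → u j ∈ Set.Ioo (0:ℝ) 1)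
    (hs : ∀ j, 1 ≤ j → s j = 1 ∨ s j = -1)
    (hdist : ∀ j k, 1 ≤ j → 1 ≤ k → u j = u k → j = k)
    (lam : (n : ℕ) → Equiv.Perm (Fin n)) (e : (n : ℕ) → Fin n → ℝ)
    (he1 : ∀ n, 1 ≤ n → StrictMono (e n))
    (he2 : ∀ n, 1 ≤ n → Set.range (e n) =
      insert (0:ℝ) {x : ℝ | ∃ j, 1 ≤ j ∧ j ≤ n - 1 ∧ u j = x})
    (hlam : ∀ n, 1 ≤ n → ∀ j k : Fin n,
      (lam n j < lam n k ↔ Prec u s (e n j) (e n k))) :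
    ∀ n, 1 ≤ n →
      ∀ hR : ((Finset.Icc 1 n).filter (fun j => u j ≤ u n)).card - 1 < n,
        (s n = 1 → IsInflation (lam n) true
          ⟨((Finset.Icc 1 n).filter (fun j => u j ≤ u n)).card - 1, hR⟩ (lam (n + 1))) ∧
        (s n = -1 → IsInflation (lam n) false
          ⟨((Finset.Icc 1 n).filter (fun j => u j ≤ u n)).card - 1, hR⟩ (lam (n + 1))) := by
  intro n hn hR
  constructor
  · intro hsn
    exact main_aux u s hu hs hdist lam e he1 he2 hlam n hn true (by simp [hsn]) hR
  · intro hsn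
    exact main_aux u s hu hs hdist lam e he1 he2 hlam n hn false (by simp [hsn]) hR
end

section
/- For every p ∈ (0,1), every n ≥ 1 and every permutation π of {1,…,n}, P_n^p(π) = N_inc(π)/(n−1)! · (1−p)^{des(π)} · p^{n−1−des(π)}. -/
open scoped Classical

/-- The recursive separable permutation distributions `P_n^p`:
`P_1^p` is the point mass at the unique permutation of one element, and
`P_{n+1}^p(ρ) = Σ_τ P_n^p(τ) · (1/n) Σ_{k} ( p·1(ρ = τ_{⊕,k}) + (1−p)·1(ρ = τ_{⊖,k}) )`. -/
noncomputable def recSepLaw (p : ℝ) : (n : ℕ) → Equiv.Perm (Fin n) → ℝ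
  | 0, _ => 1
  | 1, _ => 1
  | (n + 2), ρ => ∑ τ : Equiv.Perm (Fin (n + 1)), recSepLaw p (n + 1) τ *
      ((1 / ((n : ℝ) + 1)) * ∑ k : Fin (n + 1),
        (p * (if IsInflation τ true k ρ then (1:ℝ) else 0) +
         (1 - p) * (if IsInflation τ false k ρ then (1:ℝ) else 0)))

/-- The number of descents of a permutation. -/
noncomputable def descents {n : ℕ} (π : Equiv.Perm (Fin n)) : ℕ :=
  (Finset.univ.filter (fun i : Fin n =>
    ∃ h : (i : ℕ) + 1 < n, π ⟨(i : ℕ) + 1, h⟩ < π i)).card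

/-- Direct sum `σ ⊕ τ` of permutations. -/
def permDirectSum {m n : ℕ} (σ : Equiv.Perm (Fin m)) (τ : Equiv.Perm (Fin n)) :
    Equiv.Perm (Fin (m + n)) :=
  finSumFinEquiv.symm.trans ((Equiv.sumCongr σ τ).trans finSumFinEquiv)

/-- Skew sum `σ ⊖ τ` of permutations. -/
def permSkewSum {m n : ℕ} (σ : Equiv.Perm (Fin m)) (τ : Equiv.Perm (Fin n)) :
    Equiv.Perm (Fin (m + n)) :=
  finSumFinEquiv.symm.trans ((Equiv.sumCongr σ τ).trans
    ((Equiv.sumComm (Fin m) (Fin n)).trans (finSumFinEquiv.trans (finCongr (Nat.add_comm n m)))))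

/-- Rooted plane binary trees whose internal nodes carry a decoration in `{⊕,⊖}`
(`true` = ⊕, `false` = ⊖) and a label in `ℕ`; a pair (decorated binary tree, labeling of its
internal nodes) is the same thing as such a labeled decorated tree. -/
inductive LTree where
  | leaf : LTree
  | node : Bool → ℕ → LTree → LTree → LTree

namespace LTree

/-- Number of leaves. -/
def size : LTree → ℕ
  | leaf => 1
  | node _ _ l r => size l + size r

/-- The multiset of labels of the internal nodes. -/
def labels : LTree → Multiset ℕ
  | leaf => 0
  | node _ a l r => a ::ₘ (labels l + labels r)

/-- Labels increase along every root-to-leaf path (each internal node's label is smaller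
than all labels in its subtrees). -/
def IncAux : LTree → Prop
  | leaf => True
  | node _ a l r => (∀ b ∈ labels l, a < b) ∧ (∀ b ∈ labels r, a < b) ∧ IncAux l ∧ IncAux r

/-- The labeling is an increasing labeling: it increases along root-to-leaf paths, and is a
bijection from the internal nodes onto `{1, …, size − 1}`. -/
def Increasing (T : LTree) : Prop :=
  IncAux T ∧ labels T = (Multiset.range (size T - 1)).map (· + 1)

/-- The separable permutation `Perm(T)` associated with a decorated tree. -/
def perm : (T : LTree) → Equiv.Perm (Fin T.size)
  | leaf => Equiv.refl _
  | node b _ l r => if b then permDirectSum (perm l) (perm r) else permSkewSum (perm l) (perm r)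

end LTree

/-- `N_inc(π)`: the number of pairs (decorated binary tree, increasing labeling) whose
associated permutation is `π`. -/
noncomputable def Ninc {n : ℕ} (π : Equiv.Perm (Fin n)) : ℕ :=
  Nat.card {T : LTree // T.Increasing ∧ ∃ h : T.size = n, (finCongr h).permCongr T.perm = π}

namespace SepAux
open LTree

theorem size_pos (T : LTree) : 1 ≤ T.size := by
  induction T with
  | leaf => simp [LTree.size]
  | node b a l r ihl ihr => simp [LTree.size]; omega

theorem permDirectSum_apply_nat {m n : ℕ} (σ : Equiv.Perm (Fin m)) (τ : Equiv.Perm (Fin n))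
    (i : Fin (m + n)) :
    (permDirectSum σ τ i : ℕ) =
      if h : (i : ℕ) < m then (σ ⟨i, h⟩ : ℕ) else (τ ⟨(i : ℕ) - m, by omega⟩ : ℕ) + m := by
  split
  · next h =>
    have e : finSumFinEquiv.symm i = Sum.inl ⟨(i : ℕ), h⟩ := by
      rw [← finSumFinEquiv_symm_apply_castAdd]; congr 1
    simp [permDirectSum, e]
  · next h =>
    have e : finSumFinEquiv.symm i = Sum.inr ⟨(i : ℕ) - m, by omega⟩ := by
      rw [← finSumFinEquiv_symm_apply_natAdd]; congr 1; ext; simp; omega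
    simp [permDirectSum, e]
    omega

theorem permSkewSum_apply_nat {m n : ℕ} (σ : Equiv.Perm (Fin m)) (τ : Equiv.Perm (Fin n))
    (i : Fin (m + n)) :
    (permSkewSum σ τ i : ℕ) =
      if h : (i : ℕ) < m then (σ ⟨i, h⟩ : ℕ) + n else (τ ⟨(i : ℕ) - m, by omega⟩ : ℕ) := by
  split
  · next h =>
    have e : finSumFinEquiv.symm i = Sum.inl ⟨(i : ℕ), h⟩ := by
      rw [← finSumFinEquiv_symm_apply_castAdd]; congr 1
    simp [permSkewSum, e]
  · next h =>
    have e : finSumFinEquiv.symm i = Sum.inr ⟨(i : ℕ) - m, by omega⟩ := by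
      rw [← finSumFinEquiv_symm_apply_natAdd]; congr 1; ext; simp; omega
    simp [permSkewSum, e]

/-- ℕ-valued version of `LTree.perm`. -/
def pval : LTree → ℕ → ℕ
  | .leaf, _ => 0
  | .node b _ l r, i =>
      if b then (if i < l.size then pval l i else pval r (i - l.size) + l.size)
      else (if i < l.size then pval l i + r.size else pval r (i - l.size))

theorem pval_eq (T : LTree) (i : Fin T.size) : (T.perm i : ℕ) = pval T i := by
  induction T with
  | leaf => simp [LTree.perm, pval]; have := i.isLt; simp only [LTree.size] at this; omega
  | node b a l r ihl ihr =>
    have hsz : (LTree.node b a l r).size = l.size + r.size := rfl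
    rcases b with _ | _
    · show (permSkewSum l.perm r.perm ⟨(i:ℕ), _⟩ : ℕ) = _
      rw [permSkewSum_apply_nat]
      simp only [pval]
      split
      · next h => simp [h, ihl ⟨(i:ℕ), h⟩]
      · next h => simp [h, ihr ⟨(i:ℕ) - l.size, by have h2 := i.isLt; simp only [LTree.size] at h2; omega⟩]
    · show (permDirectSum l.perm r.perm ⟨(i:ℕ), _⟩ : ℕ) = _
      rw [permDirectSum_apply_nat]
      simp only [pval]
      split
      · next h => simp [h, ihl ⟨(i:ℕ), h⟩]
      · next h => simp [h, ihr ⟨(i:ℕ) - l.size, by have h2 := i.isLt; simp only [LTree.size] at h2; omega⟩]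

theorem pval_lt (T : LTree) {i : ℕ} (h : i < T.size) : pval T i < T.size := by
  have := (T.perm ⟨i, h⟩).isLt
  rw [pval_eq T ⟨i, h⟩] at this
  exact this

end SepAux
namespace SepAux
open LTree

theorem pval_lt' (T : LTree) (i : ℕ) : pval T i < T.size := by
  induction T generalizing i with
  | leaf => simp [pval, LTree.size]
  | node b a l r ihl ihr =>
    show _ < l.size + r.size
    have h1 := ihl i
    have h2 := ihr (i - l.size)
    simp only [pval]
    split_ifs <;> omega

/-- Insert a new internal node with sign `s` and label `a` at leaf position `k`. -/
def ins (s : Bool) (a : ℕ) : LTree → ℕ → LTree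
  | .leaf, _ => .node s a .leaf .leaf
  | .node b c l r, k =>
      if k < l.size then .node b c (ins s a l k) r else .node b c l (ins s a r (k - l.size))

theorem size_ins (s : Bool) (a : ℕ) (T : LTree) (k : ℕ) : (ins s a T k).size = T.size + 1 := by
  induction T generalizing k with
  | leaf => rfl
  | node b c l r ihl ihr =>
    simp only [ins]
    split_ifs <;> simp only [LTree.size, ihl, ihr] <;> omega

theorem labels_ins (s : Bool) (a : ℕ) (T : LTree) (k : ℕ) :
    (ins s a T k).labels = a ::ₘ T.labels := by
  induction T generalizing k with
  | leaf => rfl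
  | node b c l r ihl ihr =>
    simp only [ins]
    split_ifs
    · simp only [LTree.labels, ihl, Multiset.cons_add, Multiset.add_cons]
      rw [Multiset.cons_swap]
    · simp only [LTree.labels, ihr, Multiset.cons_add, Multiset.add_cons]
      rw [Multiset.cons_swap]

def lift (j x : ℕ) : ℕ := if x ≤ j then x else x + 1

/-- ℕ-level inflation values. -/
def nInfl (f : ℕ → ℕ) (s : Bool) (k i : ℕ) : ℕ :=
  if i < k then lift (f k) (f i)
  else if i = k then (if s then f k else f k + 1)
  else if i = k + 1 then (if s then f k + 1 else f k)
  else lift (f k) (f (i - 1))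

end SepAux
namespace SepAux
open LTree

theorem nInfl_lt {f : ℕ → ℕ} {s : Bool} {k i : ℕ} (h : i < k) :
    nInfl f s k i = lift (f k) (f i) := by simp [nInfl, h]

theorem nInfl_self {f : ℕ → ℕ} {s : Bool} {k : ℕ} :
    nInfl f s k k = if s then f k else f k + 1 := by simp [nInfl]

theorem nInfl_succ {f : ℕ → ℕ} {s : Bool} {k : ℕ} :
    nInfl f s k (k + 1) = if s then f k + 1 else f k := by simp [nInfl]

theorem nInfl_gt {f : ℕ → ℕ} {s : Bool} {k i : ℕ} (h : k + 1 < i) :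
    nInfl f s k i = lift (f k) (f (i - 1)) := by
  have h1 : ¬ i < k := by omega
  have h2 : i ≠ k := by omega
  have h3 : i ≠ k + 1 := by omega
  simp [nInfl, h1, h2, h3]

theorem pval_node_lt {b : Bool} {c : ℕ} {l r : LTree} {i : ℕ} (h : i < l.size) :
    pval (.node b c l r) i = if b then pval l i else pval l i + r.size := by
  simp [pval, h]

theorem pval_node_ge {b : Bool} {c : ℕ} {l r : LTree} {i : ℕ} (h : l.size ≤ i) :
    pval (.node b c l r) i = if b then pval r (i - l.size) + l.size else pval r (i - l.size) := by
  simp [pval, Nat.not_lt.2 h]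

theorem pval_ins (T : LTree) (s : Bool) (a : ℕ) :
    ∀ k, k < T.size → ∀ i, i ≤ T.size → pval (ins s a T k) i = nInfl (pval T) s k i := by
  induction T with
  | leaf =>
    intro k hk i hi
    simp only [LTree.size] at hk hi
    have hk0 : k = 0 := by omega
    subst hk0
    interval_cases i
    · simp [ins, pval, nInfl, lift, LTree.size]
    · rw [show (1 : ℕ) = 0 + 1 from rfl, nInfl_succ]
      simp [ins, pval, lift, LTree.size]
  | node b c l r ihl ihr =>
    intro k hk i hi
    simp only [LTree.size] at hk hi
    have b3 := pval_lt' l k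
    have b6 := pval_lt' r (k - l.size)
    by_cases hkl : k < l.size
    · -- inserted on the left
      have hsz : (ins s a l k).size = l.size + 1 := size_ins s a l k
      have hL : pval (ins s a (LTree.node b c l r) k) i =
          pval (.node b c (ins s a l k) r) i := by
        simp only [ins, if_pos hkl]
      rw [hL]
      rcases show i < k ∨ i = k ∨ i = k + 1 ∨ (k + 1 < i ∧ i ≤ l.size) ∨
          (l.size < i ∧ k + 1 < i) from by omega with h | h | h | ⟨h, h'⟩ | ⟨h, h'⟩
      · -- i < k
        have b1 := pval_lt' l i
        rw [nInfl_lt h, pval_node_lt (show i < (ins s a l k).size by omega),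
          ihl k hkl i (by omega), nInfl_lt h,
          pval_node_lt hkl, pval_node_lt (show i < l.size by omega)]
        simp only [lift]; split_ifs <;> omega
      · rw [h, nInfl_self, pval_node_lt (show k < (ins s a l k).size by omega),
          ihl k hkl k (by omega), nInfl_self, pval_node_lt hkl]
        split_ifs <;> omega
      · rw [h, nInfl_succ, pval_node_lt (show k + 1 < (ins s a l k).size by omega),
          ihl k hkl (k + 1) (by omega), nInfl_succ, pval_node_lt hkl]
        split_ifs <;> omega
      · -- k + 1 < i ≤ l.size
        have b2 := pval_lt' l (i - 1)
        rw [nInfl_gt h, pval_node_lt (show i < (ins s a l k).size by omega),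
          ihl k hkl i (by omega), nInfl_gt h,
          pval_node_lt hkl, pval_node_lt (show i - 1 < l.size by omega)]
        simp only [lift]; split_ifs <;> omega
      · -- l.size < i
        have b7 := pval_lt' r (i - 1 - l.size)
        rw [nInfl_gt h', pval_node_ge (show (ins s a l k).size ≤ i by omega),
          pval_node_lt hkl, pval_node_ge (show l.size ≤ i - 1 by omega), hsz,
          show i - (l.size + 1) = i - 1 - l.size by omega]
        simp only [lift]; split_ifs <;> omega
    · -- inserted on the right
      have hsz : (ins s a r (k - l.size)).size = r.size + 1 := size_ins s a r (k - l.size)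
      have hL : pval (ins s a (LTree.node b c l r) k) i =
          pval (.node b c l (ins s a r (k - l.size))) i := by
        simp only [ins, if_neg hkl]
      rw [hL]
      have hkr : k - l.size < r.size := by omega
      rcases show i < l.size ∨ (l.size ≤ i ∧ i < k) ∨ i = k ∨ i = k + 1 ∨
          (k + 1 < i) from by omega with h | ⟨h, h'⟩ | h | h | h
      · -- i < l.size ≤ k
        have b1 := pval_lt' l i
        rw [nInfl_lt (show i < k by omega), pval_node_lt h, pval_node_lt h,
          pval_node_ge (show l.size ≤ k by omega)]
        simp only [lift]; split_ifs <;> omega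
      · -- l.size ≤ i < k
        have b4 := pval_lt' r (i - l.size)
        rw [nInfl_lt h', pval_node_ge h, pval_node_ge h,
          pval_node_ge (show l.size ≤ k by omega),
          ihr (k - l.size) hkr (i - l.size) (by omega),
          nInfl_lt (show i - l.size < k - l.size by omega)]
        simp only [lift]; split_ifs <;> omega
      · rw [h, nInfl_self, pval_node_ge (show l.size ≤ k by omega),
          pval_node_ge (show l.size ≤ k by omega),
          ihr (k - l.size) hkr (k - l.size) (by omega), nInfl_self]
        split_ifs <;> omega
      · rw [h, nInfl_succ, pval_node_ge (show l.size ≤ k + 1 by omega),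
          pval_node_ge (show l.size ≤ k by omega),
          ihr (k - l.size) hkr (k + 1 - l.size) (by omega),
          show k + 1 - l.size = (k - l.size) + 1 by omega, nInfl_succ]
        split_ifs <;> omega
      · -- k + 1 < i
        have b7 := pval_lt' r (i - 1 - l.size)
        rw [nInfl_gt h, pval_node_ge (show l.size ≤ i by omega),
          pval_node_ge (show l.size ≤ i - 1 by omega),
          pval_node_ge (show l.size ≤ k by omega),
          ihr (k - l.size) hkr (i - l.size) (by omega),
          nInfl_gt (show (k - l.size) + 1 < i - l.size by omega),
          show i - l.size - 1 = i - 1 - l.size by omega]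
        simp only [lift]; split_ifs <;> omega

end SepAux
namespace SepAux
open LTree

/-- Total ℕ-valued version of a permutation of `Fin m`. -/
def fnat {m : ℕ} (τ : Equiv.Perm (Fin m)) (x : ℕ) : ℕ :=
  if h : x < m then (τ ⟨x, h⟩ : ℕ) else 0

theorem fnat_lt {m : ℕ} (τ : Equiv.Perm (Fin m)) {x : ℕ} (h : x < m) : fnat τ x < m := by
  simp only [fnat, dif_pos h]
  exact (τ ⟨x, h⟩).isLt

theorem inflVal_eq_nInfl {m : ℕ} (τ : Equiv.Perm (Fin m)) (b : Bool) (k : Fin m)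
    (i : Fin (m + 1)) : inflVal τ b k i = nInfl (fnat τ) b k i := by
  have hk := k.isLt
  have hi := i.isLt
  unfold inflVal nInfl lift fnat
  simp only [Fin.eta]
  split_ifs <;> omega

end SepAux
namespace SepAux
open LTree

theorem lift_lt_lift {a x y : ℕ} : lift a x < lift a y ↔ x < y := by
  unfold lift; split_ifs <;> omega

theorem descents_eq {n : ℕ} (π : Equiv.Perm (Fin n)) :
    descents π = ((Finset.range n).filter
      (fun i => i + 1 < n ∧ fnat π (i + 1) < fnat π i)).card := by
  apply Finset.card_bij (fun (a : Fin n) _ => (a : ℕ))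
  · intro a ha
    rw [Finset.mem_filter] at ha
    obtain ⟨-, h, hlt⟩ := ha
    refine Finset.mem_filter.2 ⟨Finset.mem_range.2 a.isLt, h, ?_⟩
    simp only [fnat, dif_pos h, dif_pos a.isLt]
    exact hlt
  · intro a _ b _ hab
    exact Fin.val_injective hab
  · intro j hj
    rw [Finset.mem_filter, Finset.mem_range] at hj
    obtain ⟨hjn, h, hlt⟩ := hj
    refine ⟨⟨j, hjn⟩, Finset.mem_filter.2 ⟨Finset.mem_univ _, h, ?_⟩, rfl⟩
    simp only [fnat, dif_pos h, dif_pos hjn] at hlt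
    exact hlt

set_option maxHeartbeats 1000000 in
theorem filter_card_nInfl (f g : ℕ → ℕ) (m K : ℕ) (hK : K < m) (s : Bool)
    (finj : ∀ x y, x < m → y < m → f x = f y → x = y)
    (hg : ∀ i, i < m + 1 → g i = nInfl f s K i) :
    ((Finset.range (m + 1)).filter (fun i => i + 1 < m + 1 ∧ g (i + 1) < g i)).card
      = ((Finset.range m).filter (fun i => i + 1 < m ∧ f (i + 1) < f i)).card
        + (if s then 0 else 1) := by
  classical
  have himg : (Finset.range (m + 1)).filter (fun i => i + 1 < m + 1 ∧ g (i + 1) < g i)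
      = (((Finset.range m).filter (fun i => i + 1 < m ∧ f (i + 1) < f i)).image
          (fun i => if i < K then i else i + 1)) ∪ (if s then ∅ else {K}) := by
    ext j
    simp only [Finset.mem_union, Finset.mem_image, Finset.mem_filter, Finset.mem_range]
    constructor
    · rintro ⟨hj, hj1, hlt⟩
      rw [hg j hj, hg (j + 1) hj1] at hlt
      rcases show j < K ∨ j = K ∨ (K < j ∧ j + 1 < m + 1) from by omega with h | h | ⟨h, h'⟩
      · -- j < K : witness i = j
        left
        refine ⟨j, ⟨by omega, by omega, ?_⟩, by simp [h]⟩
        rw [nInfl_lt h] at hlt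
        by_cases h2 : j + 1 < K
        · rw [nInfl_lt h2] at hlt
          exact lift_lt_lift.1 hlt
        · have hjk : j + 1 = K := by omega
          have hne : f (j + 1) ≠ f j := fun e => by
            have := finj (j + 1) j (by omega) (by omega) e; omega
          rw [hjk, nInfl_self] at hlt
          rw [hjk]
          unfold lift at hlt
          split_ifs at hlt <;> omega
      · -- j = K
        subst h
        rw [nInfl_self, nInfl_succ] at hlt
        right
        split_ifs at hlt <;> simp_all
      · -- K < j
        left
        have hKj : ¬ j - 1 < K := by omega
        refine ⟨j - 1, ⟨by omega, by omega, ?_⟩, by simp [hKj]; omega⟩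
        rw [nInfl_gt (by omega)] at hlt
        by_cases h2 : j = K + 1
        · subst h2
          rw [nInfl_succ] at hlt
          have hne : f (K + 1) ≠ f K := fun e => by
            have := finj (K + 1) K (by omega) (by omega) e; omega
          rw [show K + 1 + 1 - 1 = K + 1 from rfl] at hlt
          simp only [show K + 1 - 1 = K from rfl]
          unfold lift at hlt
          split_ifs at hlt <;> omega
        · rw [show j + 1 - 1 = j from rfl, nInfl_gt (by omega)] at hlt
          have := lift_lt_lift.1 hlt
          have e : j - 1 + 1 = j := by omega
          rw [e]
          exact this
    · rintro (⟨i, ⟨hi, hi1, hfi⟩, hφ⟩ | hex)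
      · by_cases hiK : i < K
        · rw [if_pos hiK] at hφ
          subst hφ
          refine ⟨by omega, by omega, ?_⟩
          rw [hg i (by omega), hg (i + 1) (by omega), nInfl_lt hiK]
          by_cases h2 : i + 1 < K
          · rw [nInfl_lt h2]
            exact lift_lt_lift.2 hfi
          · have hjk : i + 1 = K := by omega
            have hne : f (i + 1) ≠ f i := fun e => by
              have := finj (i + 1) i (by omega) (by omega) e; omega
            rw [hjk, nInfl_self]
            rw [hjk] at hfi
            unfold lift
            split_ifs <;> omega
        · rw [if_neg hiK] at hφ
          subst hφ
          refine ⟨by omega, by omega, ?_⟩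
          rw [hg (i + 1) (by omega), hg (i + 1 + 1) (by omega),
            nInfl_gt (show K + 1 < i + 1 + 1 by omega), show i + 1 + 1 - 1 = i + 1 from rfl]
          by_cases h2 : i = K
          · rw [h2, nInfl_succ]
            have hne : f (K + 1) ≠ f K := fun e => by
              have := finj (K + 1) K (by omega) (by omega) e; omega
            rw [h2] at hfi
            unfold lift
            split_ifs <;> omega
          · rw [nInfl_gt (by omega), show i + 1 - 1 = i from rfl]
            exact lift_lt_lift.2 hfi
      · -- the extra element K, present iff ¬s
        rcases s with _ | _
        · simp only [Bool.false_eq_true, if_false, Finset.mem_singleton] at hex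
          subst hex
          refine ⟨by omega, by omega, ?_⟩
          rw [hg j (by omega), hg (j + 1) (by omega), nInfl_self, nInfl_succ]
          simp
        · simp only [if_true, reduceIte] at hex
          exact absurd hex (Finset.notMem_empty _)
  rw [himg, Finset.card_union_of_disjoint, Finset.card_image_of_injOn]
  · congr 1
    rcases s with _ | _ <;> simp
  · intro a _ b _ hab
    simp only at hab
    split_ifs at hab <;> omega
  · rcases s with _ | _
    · simp only [Bool.false_eq_true, if_false, Finset.disjoint_singleton_right,
        Finset.mem_image, Finset.mem_filter, Finset.mem_range]
      rintro ⟨x, ⟨hx, hx1, hlt⟩, hxK⟩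
      split_ifs at hxK <;> omega
    · simp

theorem descents_inflation {m : ℕ} (τ : Equiv.Perm (Fin m)) (s : Bool) (k : Fin m)
    (ρ : Equiv.Perm (Fin (m + 1))) (h : IsInflation τ s k ρ) :
    descents ρ = descents τ + (if s then 0 else 1) := by
  rw [descents_eq ρ, descents_eq τ]
  apply filter_card_nInfl (fnat τ) (fnat ρ) m (k : ℕ) k.isLt s
  · intro x y hx hy e
    simp only [fnat, dif_pos hx, dif_pos hy] at e
    exact congrArg Fin.val (τ.injective (Fin.val_injective e))
  · intro i hi
    have := h ⟨i, hi⟩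
    rw [inflVal_eq_nInfl] at this
    simpa [fnat, dif_pos hi, show i ≤ m by omega] using this

end SepAux
namespace SepAux
open LTree

theorem size_eq_one {T : LTree} (h : T.size = 1) : T = .leaf := by
  cases T with
  | leaf => rfl
  | node b a l r =>
    have h1 := size_pos l
    have h2 := size_pos r
    simp only [LTree.size] at h
    omega

theorem labels_eq_zero {T : LTree} (h : T.labels = 0) : T = .leaf := by
  cases T with
  | leaf => rfl
  | node b a l r => simp [LTree.labels] at h

theorem incAux_ins {T : LTree} (s : Bool) (a k : ℕ) (hT : T.IncAux)
    (ha : ∀ b ∈ T.labels, b < a) : (ins s a T k).IncAux := by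
  induction T generalizing k with
  | leaf => simp [ins, LTree.IncAux, LTree.labels]
  | node b c l r ihl ihr =>
    obtain ⟨h1, h2, h3, h4⟩ := hT
    have hca : c < a := ha c (by simp [LTree.labels])
    simp only [ins]
    split_ifs
    · refine ⟨?_, h2, ihl _ h3 (fun x hx => ha x (by simp only [LTree.labels, Multiset.mem_cons, Multiset.mem_add]; tauto)), h4⟩
      intro x hx
      rw [labels_ins] at hx
      rcases Multiset.mem_cons.1 hx with rfl | hx
      · exact hca
      · exact h1 x hx
    · refine ⟨h1, ?_, h3, ihr _ h4 (fun x hx => ha x (by simp only [LTree.labels, Multiset.mem_cons, Multiset.mem_add]; tauto))⟩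
      intro x hx
      rw [labels_ins] at hx
      rcases Multiset.mem_cons.1 hx with rfl | hx
      · exact hca
      · exact h2 x hx

theorem increasing_ins {T : LTree} {m : ℕ} (s : Bool) (k : ℕ) (hT : T.Increasing)
    (hsz : T.size = m) : (ins s m T k).Increasing := by
  obtain ⟨h1, h2⟩ := hT
  have hm : 1 ≤ m := hsz ▸ size_pos T
  have hlab : ∀ b ∈ T.labels, b < m := by
    intro x hx
    rw [h2, Multiset.mem_map] at hx
    obtain ⟨y, hy, rfl⟩ := hx
    rw [Multiset.mem_range] at hy
    omega
  refine ⟨incAux_ins s m k h1 hlab, ?_⟩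
  rw [labels_ins, size_ins, hsz, h2, hsz]
  rw [show m + 1 - 1 = (m - 1) + 1 by omega, Multiset.range_succ, Multiset.map_cons]
  congr 1
  omega

/-- Decomposition: an `IncAux` tree containing a maximal label `a` is an insertion. -/
theorem decomp : ∀ U : LTree, U.IncAux → ∀ a, a ∈ U.labels → (∀ b ∈ U.labels, b ≤ a) →
    ∃ (T : LTree) (k : ℕ) (s : Bool), U = ins s a T k ∧ k < T.size ∧
      T.labels = U.labels.erase a ∧ T.IncAux ∧ T.size + 1 = U.size := by
  intro U
  induction U with
  | leaf => intro _ a ha _; simp [LTree.labels] at ha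
  | node b c l r ihl ihr =>
    intro hU a ha hmax
    obtain ⟨h1, h2, h3, h4⟩ := hU
    by_cases hal : a ∈ l.labels
    · obtain ⟨T, k, s, hl, hk, hlab, hinc, hsz⟩ := ihl h3 a hal
        (fun x hx => hmax x (by simp [LTree.labels, hx]))
      have hac : c ≠ a := by have := h1 a hal; omega
      refine ⟨.node b c T r, k, s, ?_, ?_, ?_, ⟨?_, h2, hinc, h4⟩, ?_⟩
      · simp only [ins, if_pos hk]
        rw [← hl]
      · simp only [LTree.size]
        have := size_pos r
        omega
      · simp only [LTree.labels]
        rw [Multiset.erase_cons_tail _ hac, Multiset.erase_add_left_pos _ hal, hlab]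
      · intro x hx
        rw [hlab] at hx
        exact h1 x (Multiset.mem_of_mem_erase hx)
      · simp only [LTree.size]
        omega
    · by_cases har : a ∈ r.labels
      · obtain ⟨T, k, s, hr, hk, hlab, hinc, hsz⟩ := ihr h4 a har
          (fun x hx => hmax x (by simp [LTree.labels, hx]))
        have hac : c ≠ a := by have := h2 a har; omega
        refine ⟨.node b c l T, l.size + k, s, ?_, ?_, ?_, ⟨h1, ?_, h3, hinc⟩, ?_⟩
        · simp only [ins, if_neg (show ¬ l.size + k < l.size by omega)]
          rw [show l.size + k - l.size = k by omega, ← hr]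
        · simp only [LTree.size]
          omega
        · simp only [LTree.labels]
          rw [Multiset.erase_cons_tail _ hac, Multiset.erase_add_right_pos _ har, hlab]
        · intro x hx
          rw [hlab] at hx
          exact h2 x (Multiset.mem_of_mem_erase hx)
        · simp only [LTree.size]
          omega
      · have hac : a = c := by
          simp only [LTree.labels, Multiset.mem_cons, Multiset.mem_add] at ha
          tauto
        subst hac
        have hl0 : l = .leaf := by
          apply labels_eq_zero
          by_contra h0
          obtain ⟨x, hx⟩ := Multiset.exists_mem_of_ne_zero h0
          have hxa := h1 x hx
          have := hmax x (by simp only [LTree.labels, Multiset.mem_cons, Multiset.mem_add]; tauto)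
          omega
        have hr0 : r = .leaf := by
          apply labels_eq_zero
          by_contra h0
          obtain ⟨x, hx⟩ := Multiset.exists_mem_of_ne_zero h0
          have hxa := h2 x hx
          have := hmax x (by simp only [LTree.labels, Multiset.mem_cons, Multiset.mem_add]; tauto)
          omega
        subst hl0 hr0
        refine ⟨.leaf, 0, b, rfl, by simp [LTree.size], ?_, trivial, by simp [LTree.size]⟩
        simp [LTree.labels, Multiset.erase_cons_head]

end SepAux
namespace SepAux
open LTree

theorem ins_inj : ∀ (T T' : LTree) (s s' : Bool) (a k k' : ℕ),
    k < T.size → k' < T'.size → a ∉ T.labels → a ∉ T'.labels →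
    ins s a T k = ins s' a T' k' → s = s' ∧ T = T' ∧ k = k' := by
  intro T
  induction T with
  | leaf =>
    intro T' s s' a k k' hk hk' haT haT' he
    cases T' with
    | leaf =>
      simp only [ins] at he
      injection he with h1 h2 h3 h4
      simp only [LTree.size] at hk hk'
      exact ⟨h1, rfl, by omega⟩
    | node b c l r =>
      simp only [ins] at he
      split_ifs at he <;>
        (injection he with h1 h2 h3 h4
         exact absurd h2 (fun h => haT' (by rw [← h]; simp [LTree.labels])))
  | node b c l r ihl ihr =>
    intro T' s s' a k k' hk hk' haT haT' he
    have haTl : a ∉ l.labels := fun h => haT (by simp [LTree.labels, Multiset.mem_add]; tauto)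
    have haTr : a ∉ r.labels := fun h => haT (by simp [LTree.labels, Multiset.mem_add]; tauto)
    have haTc : c ≠ a := fun h => haT (by rw [h]; simp [LTree.labels])
    cases T' with
    | leaf =>
      simp only [ins] at he
      split_ifs at he <;>
        (injection he with h1 h2 h3 h4
         exact absurd h2 (fun h => haT (by rw [h]; simp [LTree.labels])))
    | node b' c' l' r' =>
      have haTl' : a ∉ l'.labels := fun h => haT' (by simp [LTree.labels, Multiset.mem_add]; tauto)
      have haTr' : a ∉ r'.labels := fun h => haT' (by simp [LTree.labels, Multiset.mem_add]; tauto)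
      simp only [ins] at he
      simp only [LTree.size] at hk hk'
      split_ifs at he with hc1 hc2 hc2
      · injection he with h1 h2 h3 h4
        obtain ⟨hs, hT, hkk⟩ := ihl l' s s' a k k' hc1 hc2 haTl haTl' h3
        exact ⟨hs, by rw [h1, h2, hT, h4], hkk⟩
      · injection he with h1 h2 h3 h4
        exfalso
        apply haTl'
        rw [← h3, labels_ins]
        simp
      · injection he with h1 h2 h3 h4
        exfalso
        apply haTr'
        rw [← h4, labels_ins]
        simp
      · injection he with h1 h2 h3 h4
        have hlsz : l.size = l'.size := by rw [h3]
        obtain ⟨hs, hT, hkk⟩ := ihr r' s s' a (k - l.size) (k' - l'.size)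
          (by omega) (by omega) haTr haTr' h4
        exact ⟨hs, by rw [h1, h2, h3, hT], by omega⟩

theorem decomp_increasing {U : LTree} {m : ℕ} (hU : U.Increasing) (hsz : U.size = m + 1)
    (hm : 1 ≤ m) :
    ∃ (T : LTree) (k : ℕ) (s : Bool), U = ins s m T k ∧ k < T.size ∧ T.Increasing ∧
      T.size = m := by
  obtain ⟨h1, h2⟩ := hU
  have e : (Multiset.range m).map (· + 1) = m ::ₘ (Multiset.range (m - 1)).map (· + 1) := by
    conv_lhs => rw [show m = (m - 1) + 1 by omega]
    rw [Multiset.range_succ, Multiset.map_cons]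
    congr 1
    omega
  have ha : m ∈ U.labels := by
    rw [h2, hsz, Nat.add_sub_cancel, e]
    exact Multiset.mem_cons_self _ _
  have hmax : ∀ x ∈ U.labels, x ≤ m := by
    intro x hx
    rw [h2, hsz, Nat.add_sub_cancel, Multiset.mem_map] at hx
    obtain ⟨y, hy, rfl⟩ := hx
    rw [Multiset.mem_range] at hy
    omega
  obtain ⟨T, k, s, hins, hk, hlab, hinc, hszT⟩ := decomp U h1 m ha hmax
  refine ⟨T, k, s, hins, hk, ⟨hinc, ?_⟩, by omega⟩
  rw [hlab, h2, hsz, Nat.add_sub_cancel, e, Multiset.erase_cons_head,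
    show T.size - 1 = m - 1 by omega]

theorem fnat_tree {T : LTree} {m : ℕ} (hsz : T.size = m) {x : ℕ} (hx : x < m) :
    fnat ((finCongr hsz).permCongr T.perm) x = pval T x := by
  simp only [fnat, dif_pos hx, Equiv.permCongr_apply, finCongr_apply, Fin.coe_cast]
  rw [pval_eq]
  congr 1

theorem isInflation_ins (T : LTree) {m : ℕ} (hsz : T.size = m) (k : ℕ) (hk : k < m) (s : Bool)
    (a : ℕ) (hsz' : (ins s a T k).size = m + 1) :
    IsInflation ((finCongr hsz).permCongr T.perm) s ⟨k, hk⟩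
      ((finCongr hsz').permCongr (ins s a T k).perm) := by
  intro i
  rw [inflVal_eq_nInfl]
  have hL : (((finCongr hsz').permCongr (ins s a T k).perm) i : ℕ) = pval (ins s a T k) ↑i := by
    have h := fnat_tree hsz' (x := (i : ℕ)) i.isLt
    simp only [fnat, dif_pos i.isLt] at h
    rw [← h]
  rw [hL, pval_ins T s a k (by omega) (i : ℕ) (by omega)]
  have hik : (i : ℕ) ≤ m := by omega
  rcases show (i : ℕ) < k ∨ (i : ℕ) = k ∨ (i : ℕ) = k + 1 ∨ k + 1 < (i : ℕ) from by omega
    with h | h | h | h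
  · rw [nInfl_lt h, nInfl_lt (show (i:ℕ) < ((⟨k, hk⟩ : Fin m) : ℕ) from h),
      fnat_tree hsz hk, fnat_tree hsz (by omega)]
  · rw [h]
    rw [show ((⟨k, hk⟩ : Fin m) : ℕ) = k from rfl, nInfl_self, nInfl_self,
      fnat_tree hsz hk]
  · rw [h]
    rw [show ((⟨k, hk⟩ : Fin m) : ℕ) = k from rfl, nInfl_succ, nInfl_succ,
      fnat_tree hsz hk]
  · rw [nInfl_gt h, nInfl_gt (show ((⟨k, hk⟩ : Fin m) : ℕ) + 1 < (i:ℕ) from h),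
      fnat_tree hsz hk, fnat_tree hsz (show (i:ℕ) - 1 < m by omega)]

theorem isInflation_unique {m : ℕ} {τ : Equiv.Perm (Fin m)} {s : Bool} {k : Fin m}
    {ρ ρ' : Equiv.Perm (Fin (m + 1))} (h : IsInflation τ s k ρ) (h' : IsInflation τ s k ρ') :
    ρ = ρ' := by
  apply Equiv.ext
  intro i
  exact Fin.val_injective ((h i).trans (h' i).symm)

end SepAux
namespace SepAux
open LTree

/-- The set of labeled decorated trees realizing `π`. -/
abbrev S' {n : ℕ} (π : Equiv.Perm (Fin n)) : Type :=
  {T : LTree // T.Increasing ∧ ∃ h : T.size = n, (finCongr h).permCongr T.perm = π}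

theorem Ninc_eq {n : ℕ} (π : Equiv.Perm (Fin n)) : Ninc π = Nat.card (S' π) := rfl

theorem not_mem_labels {T : LTree} {m : ℕ} (hT : T.Increasing) (hsz : T.size = m) :
    m ∉ T.labels := by
  intro h
  rw [hT.2, Multiset.mem_map] at h
  obtain ⟨y, hy, hym⟩ := h
  rw [Multiset.mem_range] at hy
  omega

abbrev Fib {m : ℕ} (ρ : Equiv.Perm (Fin (m + 1))) (x : Equiv.Perm (Fin m) × Fin m × Bool) :
    Type :=
  {T : LTree // (T.Increasing ∧ ∃ h : T.size = m, (finCongr h).permCongr T.perm = x.1)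
    ∧ IsInflation x.1 x.2.2 x.2.1 ρ}

noncomputable def Phi {m : ℕ} (ρ : Equiv.Perm (Fin (m + 1))) (y : Σ x, Fib ρ x) : S' ρ :=
  ⟨ins y.fst.2.2 m y.snd.val (y.fst.2.1 : ℕ), by
    obtain ⟨⟨τ, k, s⟩, T, ⟨hinc, hsz, hperm⟩, hinf⟩ := y
    refine ⟨increasing_ins _ _ hinc hsz, ?_⟩
    have hsz' : (ins s m T (k : ℕ)).size = m + 1 := by rw [size_ins, hsz]
    refine ⟨hsz', ?_⟩
    have h1 := isInflation_ins T hsz (k : ℕ) k.isLt s m hsz'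
    rw [hperm] at h1
    exact isInflation_unique h1 hinf⟩

theorem Phi_injective {m : ℕ} (ρ : Equiv.Perm (Fin (m + 1))) :
    Function.Injective (Phi ρ) := by
  rintro ⟨⟨τ, k, s⟩, T, ⟨hinc, hsz, hperm⟩, hinf⟩
    ⟨⟨τ', k', s'⟩, T', ⟨hinc', hsz', hperm'⟩, hinf'⟩ he
  have hv : ins s m T (k : ℕ) = ins s' m T' (k' : ℕ) := congrArg Subtype.val he
  obtain ⟨hs, hT, hkv⟩ := ins_inj T T' s s' m (k : ℕ) (k' : ℕ)
    (by rw [hsz]; exact k.isLt) (by rw [hsz']; exact k'.isLt)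
    (not_mem_labels hinc hsz) (not_mem_labels hinc' hsz') hv
  subst hs hT
  have hkk : k = k' := Fin.val_injective hkv
  subst hkk
  have hττ : τ = τ' := hperm.symm.trans hperm'
  subst hττ
  rfl

theorem Phi_surjective {m : ℕ} (hm : 1 ≤ m) (ρ : Equiv.Perm (Fin (m + 1))) :
    Function.Surjective (Phi ρ) := by
  rintro ⟨U, hUinc, hUsz, hUperm⟩
  obtain ⟨T, k, s, hins, hk, hTinc, hTsz⟩ := decomp_increasing hUinc hUsz hm
  subst hins
  have hk' : k < m := by omega
  refine ⟨⟨⟨(finCongr hTsz).permCongr T.perm, ⟨k, hk'⟩, s⟩, ⟨T, ⟨⟨hTinc, hTsz, rfl⟩, ?_⟩⟩⟩, ?_⟩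
  · have h1 := isInflation_ins T hTsz k hk' s m hUsz
    rw [hUperm] at h1
    exact h1
  · exact Subtype.ext rfl

theorem S'_finite : ∀ (n : ℕ) (π : Equiv.Perm (Fin n)), Finite (S' π) := by
  intro n
  induction n using Nat.strong_induction_on with
  | _ n ih =>
    obtain _ | _ | m := n
    · intro π
      have : IsEmpty (S' π) :=
        ⟨fun x => by obtain ⟨T, _, hsz, _⟩ := x; have := size_pos T; omega⟩
      infer_instance
    · intro π
      have : Subsingleton (S' π) := ⟨by
        rintro ⟨T, _, hszT, _⟩ ⟨T', _, hszT', _⟩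
        exact Subtype.ext ((size_eq_one hszT).trans (size_eq_one hszT').symm)⟩
      exact Finite.of_subsingleton
    · intro ρ
      haveI h1 : ∀ τ : Equiv.Perm (Fin (m + 1)), Finite (S' τ) :=
        fun τ => ih (m + 1) (by omega) τ
      haveI h2 : ∀ x, Finite (Fib ρ x) := fun x =>
        Finite.of_injective (fun T : Fib ρ x => (⟨T.val, T.prop.1⟩ : S' x.1))
          (fun a b h => by
            have h2 := congrArg (fun z : S' x.1 => z.val) h
            exact Subtype.ext h2)
      exact Finite.of_surjective (Phi ρ) (Phi_surjective (by omega) ρ)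

theorem nat_card_sigma {ι : Type*} [Fintype ι] (F : ι → Type*) [∀ i, Finite (F i)] :
    Nat.card (Σ i, F i) = ∑ i, Nat.card (F i) := by
  letI : ∀ i, Fintype (F i) := fun i => Fintype.ofFinite _
  rw [Nat.card_eq_fintype_card, Fintype.card_sigma]
  exact Finset.sum_congr rfl fun i _ => (Nat.card_eq_fintype_card).symm

theorem card_S {m : ℕ} (hm : 1 ≤ m) (ρ : Equiv.Perm (Fin (m + 1))) :
    Ninc ρ = ∑ τ : Equiv.Perm (Fin m), ∑ k : Fin m,
      ((if IsInflation τ true k ρ then Ninc τ else 0) +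
       (if IsInflation τ false k ρ then Ninc τ else 0)) := by
  classical
  haveI h1 : ∀ τ : Equiv.Perm (Fin m), Finite (S' τ) := fun τ => S'_finite m τ
  haveI h2 : ∀ x, Finite (Fib ρ x) := fun x =>
    Finite.of_injective (fun T : Fib ρ x => (⟨T.val, T.prop.1⟩ : S' x.1))
      (fun a b h => by
            have h2 := congrArg (fun z : S' x.1 => z.val) h
            exact Subtype.ext h2)
  have hbij : Function.Bijective (Phi ρ) := ⟨Phi_injective ρ, Phi_surjective hm ρ⟩
  rw [Ninc_eq, ← Nat.card_congr (Equiv.ofBijective _ hbij), nat_card_sigma,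
    Fintype.sum_prod_type]
  refine Finset.sum_congr rfl fun τ _ => ?_
  rw [Fintype.sum_prod_type]
  refine Finset.sum_congr rfl fun k _ => ?_
  rw [Fintype.sum_bool]
  have ha : ∀ s : Bool,
      Nat.card (Fib ρ (τ, k, s)) = if IsInflation τ s k ρ then Ninc τ else 0 := by
    intro s
    by_cases h : IsInflation τ s k ρ
    · rw [if_pos h, Ninc_eq]
      exact Nat.card_congr (Equiv.subtypeEquivRight fun T =>
        ⟨fun hp => hp.1, fun hq => ⟨hq, h⟩⟩)
    · rw [if_neg h]
      haveI : IsEmpty (Fib ρ (τ, k, s)) := ⟨fun T => h T.prop.2⟩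
      exact Nat.card_of_isEmpty
  rw [ha true, ha false]

end SepAux
namespace SepAux
open LTree

theorem descents_le {n : ℕ} (π : Equiv.Perm (Fin n)) : descents π ≤ n - 1 := by
  rw [descents_eq]
  have hsub : (Finset.range n).filter (fun i => i + 1 < n ∧ fnat π (i + 1) < fnat π i)
      ⊆ Finset.range (n - 1) := by
    intro x hx
    rw [Finset.mem_filter, Finset.mem_range] at hx
    rw [Finset.mem_range]
    omega
  simpa using Finset.card_le_card hsub

theorem descents_one (π : Equiv.Perm (Fin 1)) : descents π = 0 := by
  rw [descents_eq, Finset.filter_false_of_mem, Finset.card_empty]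
  rintro i hi ⟨h, -⟩
  rw [Finset.mem_range] at hi
  omega

theorem Ninc_one (π : Equiv.Perm (Fin 1)) : Ninc π = 1 := by
  rw [Ninc_eq]
  refine Nat.card_eq_one_iff_unique.2 ⟨⟨?_⟩, ⟨?_⟩⟩
  · rintro ⟨T, _, hszT, _⟩ ⟨T', _, hszT', _⟩
    exact Subtype.ext ((size_eq_one hszT).trans (size_eq_one hszT').symm)
  · refine ⟨LTree.leaf, ⟨trivial, ?_⟩, rfl, ?_⟩
    · rfl
    · exact Equiv.ext fun i => Subsingleton.elim _ _

theorem main (p : ℝ) (hp : p ∈ Set.Ioo (0:ℝ) 1) :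
    ∀ n, 1 ≤ n → ∀ π : Equiv.Perm (Fin n),
      recSepLaw p n π = (Ninc π : ℝ) / (Nat.factorial (n - 1) : ℝ) *
        (1 - p) ^ (descents π) * p ^ (n - 1 - descents π) := by
  obtain ⟨hp0, hp1⟩ := hp
  intro n
  induction n with
  | zero => omega
  | succ n ih =>
    intro _ π
    rcases Nat.eq_zero_or_pos n with rfl | hn1
    · rw [descents_one π, Ninc_one π]
      simp [recSepLaw]
    · obtain ⟨m, rfl⟩ : ∃ m, n = m + 1 := ⟨n - 1, by omega⟩
      have hdρ : descents π ≤ m + 1 := by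
        have := descents_le π
        omega
      rw [recSepLaw]
      have hterm : ∀ τ : Equiv.Perm (Fin (m + 1)),
          recSepLaw p (m + 1) τ * ((1 / ((m : ℝ) + 1)) * ∑ k : Fin (m + 1),
            (p * (if IsInflation τ true k π then (1:ℝ) else 0) +
             (1 - p) * (if IsInflation τ false k π then (1:ℝ) else 0)))
          = ∑ k : Fin (m + 1),
              (1 / (Nat.factorial (m + 1) : ℝ) * (1 - p) ^ descents π
                  * p ^ (m + 1 - descents π)) *
                ((if IsInflation τ true k π then (Ninc τ : ℝ) else 0) +
                 (if IsInflation τ false k π then (Ninc τ : ℝ) else 0)) := by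
        intro τ
        rw [ih (by omega) τ, Finset.mul_sum, Finset.mul_sum]
        refine Finset.sum_congr rfl fun k _ => ?_
        have hdτ : descents τ ≤ m := by
          have := descents_le τ
          omega
        have hfm : ((Nat.factorial m : ℝ)) ≠ 0 := Nat.cast_ne_zero.2 (Nat.factorial_ne_zero m)
        have hm1 : ((m : ℝ) + 1) ≠ 0 := by positivity
        by_cases h1 : IsInflation τ true k π <;> by_cases h2 : IsInflation τ false k π
        · exfalso
          have c1 := h1 k.castSucc
          have c2 := h2 k.castSucc
          rw [inflVal_eq_nInfl] at c1 c2
          simp only [Fin.coe_castSucc] at c1 c2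
          rw [nInfl_self] at c1 c2
          simp only [if_true, Bool.false_eq_true, if_false] at c1 c2
          omega
        · have hd := descents_inflation τ true k π h1
          simp only [if_true, Nat.add_zero] at hd
          rw [if_pos h1, if_neg h2, if_pos h1, if_neg h2, hd]
          rw [show m + 1 - 1 = m from rfl, show m + 1 - descents τ = (m - descents τ) + 1
            from by omega, pow_succ, Nat.factorial_succ]
          push_cast
          field_simp
          ring
        · have hd := descents_inflation τ false k π h2
          simp only [Bool.false_eq_true, if_false] at hd
          rw [if_neg h1, if_pos h2, if_neg h1, if_pos h2, hd]
          rw [show m + 1 - 1 = m from rfl, show m + 1 - (descents τ + 1) = m - descents τ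
            from by omega, pow_succ, Nat.factorial_succ]
          push_cast
          field_simp
          ring
        · rw [if_neg h1, if_neg h2, if_neg h1, if_neg h2]
          ring
      rw [Finset.sum_congr rfl (fun τ _ => hterm τ)]
      have hcs := card_S (show 1 ≤ m + 1 by omega) π
      have hcast : ∑ τ : Equiv.Perm (Fin (m + 1)), ∑ k : Fin (m + 1),
          ((if IsInflation τ true k π then (Ninc τ : ℝ) else 0) +
           (if IsInflation τ false k π then (Ninc τ : ℝ) else 0)) = (Ninc π : ℝ) := by
        rw [hcs]
        push_cast [Nat.cast_ite]
        rfl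
      simp_rw [← Finset.mul_sum]
      rw [hcast, show m + 1 + 1 - 1 = m + 1 from rfl]
      ring

end SepAux

/-- for every `p ∈ (0,1)`, `n ≥ 1` and every permutation `π` of `{1,…,n}`,
`P_n^p(π) = N_inc(π)/(n−1)! · (1−p)^{des(π)} · p^{n−1−des(π)}`. -/
theorem recSepLaw_eq_Ninc_formula (p : ℝ) (hp : p ∈ Set.Ioo (0:ℝ) 1) (n : ℕ) (hn : 1 ≤ n)
    (π : Equiv.Perm (Fin n)) :
    recSepLaw p n π = (Ninc π : ℝ) / (Nat.factorial (n - 1) : ℝ) *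
      (1 - p) ^ (descents π) * p ^ (n - 1 - descents π) := by
  exact SepAux.main p hp n hn π
end

section
/- Let p ∈ (0,1). The pushforward of the product measure (Lebesgue measure on [0,1]) ⊗ Bernoulli(p) ⊗ β(p,1−p) under the map (v, b, x) ↦ v·b + (1−v)·x equals β(p,1−p). In other words, if V is uniform on [0,1], B is Bernoulli(p), and X has law β(p,1−p), all independent, then V·B + (1−V)·X also has law β(p,1−p). -/
open MeasureTheory

/-- The beta distribution `β(a,b)` on `[0,1]`, with density
`x ↦ x^{a−1}(1−x)^{b−1}/(Γ(a)Γ(b))` with respect to Lebesgue measure. -/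
noncomputable def betaMeasure (a b : ℝ) : Measure ℝ :=
  (volume.restrict (Set.Icc (0:ℝ) 1)).withDensity
    (fun x => ENNReal.ofReal (x ^ (a - 1) * (1 - x) ^ (b - 1) / (Real.Gamma a * Real.Gamma b)))

/-- The Bernoulli distribution of parameter `p` on `{0,1} ⊆ ℝ`. -/
noncomputable def bernoulliMeasure (p : ℝ) : Measure ℝ :=
  (ENNReal.ofReal p) • Measure.dirac (1:ℝ) + (ENNReal.ofReal (1 - p)) • Measure.dirac (0:ℝ)

open Set ENNReal

section aux

lemma deriv1 {p t : ℝ} (ht0 : 0 < t) (ht1 : t < 1) :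
    HasDerivAt (fun t : ℝ => t ^ p * (1 - t) ^ (-p))
      (p * (t ^ (p - 1) * (1 - t) ^ (-p - 1))) t := by
  have h1t : (0:ℝ) < 1 - t := by linarith
  have hd1 : HasDerivAt (fun t : ℝ => t ^ p) (p * t ^ (p - 1)) t :=
    Real.hasDerivAt_rpow_const (Or.inl ht0.ne')
  have hd2 : HasDerivAt (fun t : ℝ => (1 - t) ^ (-p)) (p * (1 - t) ^ (-p - 1)) t := by
    have h := (Real.hasDerivAt_rpow_const (p := -p) (Or.inl h1t.ne')).comp t
      ((hasDerivAt_id t).const_sub 1)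
    exact h.congr_deriv (by ring)
  have := hd1.mul hd2
  refine this.congr_deriv ?_
  have e1 : t ^ p = t ^ (p - 1) * t := by
    rw [← Real.rpow_add_one ht0.ne' (p - 1)]; ring_nf
  have e2 : (1 - t) ^ (-p) = (1 - t) ^ (-p - 1) * (1 - t) := by
    rw [← Real.rpow_add_one h1t.ne' (-p - 1)]; ring_nf
  rw [e1, e2]; ring

lemma iiA {p x : ℝ} (hp0 : 0 < p) (hx0 : 0 ≤ x) (hx1 : x < 1) :
    IntervalIntegrable (fun t => t ^ (p - 1) * (1 - t) ^ (-p - 1)) volume 0 x := by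
  apply IntervalIntegrable.mul_continuousOn (intervalIntegral.intervalIntegrable_rpow' (by linarith))
  intro t ht
  rw [uIcc_of_le hx0] at ht
  have : (1:ℝ) - t ≠ 0 := by rcases ht with ⟨h1, h2⟩; intro h; nlinarith
  exact ((Real.continuousAt_rpow_const (1 - t) (-p - 1) (Or.inl this)).comp
    (by fun_prop)).continuousWithinAt

lemma ftcA {p x : ℝ} (hp0 : 0 < p) (hx0 : 0 ≤ x) (hx1 : x < 1) :
    ∫ t in (0:ℝ)..x, p * (t ^ (p - 1) * (1 - t) ^ (-p - 1)) = x ^ p * (1 - x) ^ (-p) := by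
  have key := intervalIntegral.integral_eq_sub_of_hasDeriv_right_of_le hx0
    (f := fun t : ℝ => t ^ p * (1 - t) ^ (-p))
    (f' := fun t => p * (t ^ (p - 1) * (1 - t) ^ (-p - 1)))
    ?_ (fun t ht => (deriv1 ht.1 (ht.2.trans hx1)).hasDerivWithinAt) ?_
  · rw [key]
    simp [Real.zero_rpow hp0.ne', Real.one_rpow]
  · apply ContinuousOn.mul
    · intro t ht
      exact (Real.continuousAt_rpow_const t p (Or.inr hp0.le)).continuousWithinAt
    · intro t ht
      have : (1:ℝ) - t ≠ 0 := by rcases ht with ⟨h1, h2⟩; intro h; nlinarith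
      exact ((Real.continuousAt_rpow_const (1 - t) (-p) (Or.inl this)).comp
        (by fun_prop)).continuousWithinAt
  · exact (iiA hp0 hx0 hx1).const_mul p

lemma deriv2 {p t : ℝ} (ht0 : 0 < t) (ht1 : t < 1) :
    HasDerivAt (fun t : ℝ => -(t ^ (p - 1) * (1 - t) ^ (1 - p)))
      ((1 - p) * (t ^ (p - 2) * (1 - t) ^ (-p))) t := by
  have h1t : (0:ℝ) < 1 - t := by linarith
  have hd1 : HasDerivAt (fun t : ℝ => t ^ (p - 1)) ((p - 1) * t ^ (p - 1 - 1)) t :=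
    Real.hasDerivAt_rpow_const (Or.inl ht0.ne')
  have hd2 : HasDerivAt (fun t : ℝ => (1 - t) ^ (1 - p)) (-((1 - p) * (1 - t) ^ (1 - p - 1))) t := by
    have h := (Real.hasDerivAt_rpow_const (p := 1 - p) (Or.inl h1t.ne')).comp t
      ((hasDerivAt_id t).const_sub 1)
    exact h.congr_deriv (by ring)
  have := (hd1.mul hd2).neg
  refine this.congr_deriv ?_
  have e1 : t ^ (p - 1) = t ^ (p - 2) * t := by
    rw [← Real.rpow_add_one ht0.ne' (p - 2)]; ring_nf
  have e2 : (1 - t) ^ (1 - p) = (1 - t) ^ (-p) * (1 - t) := by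
    rw [← Real.rpow_add_one h1t.ne' (-p)]; ring_nf
  have e3 : (1 - t) ^ (1 - p - 1) = (1 - t) ^ (-p) := by norm_num
  have e4 : t ^ (p - 1 - 1) = t ^ (p - 2) := by congr 1; ring
  rw [e3, e4, e1, e2]; ring

lemma iiB {p x : ℝ} (hp1 : p < 1) (hx0 : 0 < x) (hx1 : x < 1) :
    IntervalIntegrable (fun t => t ^ (p - 2) * (1 - t) ^ (-p)) volume x 1 := by
  apply IntervalIntegrable.continuousOn_mul (g := fun t => t ^ (p - 2))
    (f := fun t => (1 - t) ^ (-p)) ?_ ?_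
  · have h := (intervalIntegral.intervalIntegrable_rpow' (a := 1 - x) (b := 0) (r := -p)
      (by linarith)).comp_sub_left 1
    simpa using h
  · intro t ht
    rw [uIcc_of_le hx1.le] at ht
    exact (Real.continuousAt_rpow_const t (p - 2)
      (Or.inl (by rcases ht with ⟨h1, h2⟩; intro h; nlinarith))).continuousWithinAt

lemma ftcB {p x : ℝ} (hp1 : p < 1) (hx0 : 0 < x) (hx1 : x < 1) :
    ∫ t in x..(1:ℝ), (1 - p) * (t ^ (p - 2) * (1 - t) ^ (-p))
      = x ^ (p - 1) * (1 - x) ^ (1 - p) := by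
  have key := intervalIntegral.integral_eq_sub_of_hasDeriv_right_of_le hx1.le
    (f := fun t : ℝ => -(t ^ (p - 1) * (1 - t) ^ (1 - p)))
    (f' := fun t => (1 - p) * (t ^ (p - 2) * (1 - t) ^ (-p)))
    ?_ (fun t ht => (deriv2 (hx0.trans ht.1) ht.2).hasDerivWithinAt) ?_
  · rw [key]
    simp [Real.zero_rpow (by linarith : 1 - p ≠ 0), Real.one_rpow]
  · apply ContinuousOn.neg
    apply ContinuousOn.mul
    · intro t ht
      exact (Real.continuousAt_rpow_const t (p - 1)
        (Or.inl (by rcases ht with ⟨h1, h2⟩; intro h; nlinarith))).continuousWithinAt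
    · intro t ht
      exact ((Real.continuousAt_rpow_const (1 - t) (1 - p) (Or.inr (by linarith))).comp
        (by fun_prop)).continuousWithinAt
  · exact (iiB hp1 hx0 hx1).const_mul (1 - p)

end aux

set_option maxHeartbeats 1000000 in
/-- for `p ∈ (0,1)`, the pushforward of `Leb[0,1] ⊗ Bernoulli(p) ⊗ β(p,1−p)`
under `(v,b,x) ↦ v·b + (1−v)·x` equals `β(p,1−p)`: if `V` is uniform on `[0,1]`, `B` is
Bernoulli(`p`), `X` has law `β(p,1−p)`, all independent, then `V·B + (1−V)·X ~ β(p,1−p)`. -/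
theorem betaMeasure_fixed_point (p : ℝ) (hp : p ∈ Set.Ioo (0:ℝ) 1) :
    Measure.map (fun q : ℝ × ℝ × ℝ => q.1 * q.2.1 + (1 - q.1) * q.2.2)
      ((volume.restrict (Set.Icc (0:ℝ) 1)).prod
        ((bernoulliMeasure p).prod (betaMeasure p (1 - p)))) =
    betaMeasure p (1 - p) := by
  obtain ⟨hp0, hp1⟩ := hp
  have hΓ : 0 < Real.Gamma p * Real.Gamma (1 - p) :=
    mul_pos (Real.Gamma_pos_of_pos hp0) (Real.Gamma_pos_of_pos (by linarith))
  set c : ℝ := Real.Gamma p * Real.Gamma (1 - p) with hcdef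
  set d : ℝ → ℝ := fun t => t ^ (p - 1) * (1 - t) ^ (-p) / c with hddef
  have hdm : Measurable d := by fun_prop
  have hdnn : ∀ t : ℝ, 0 ≤ t → t ≤ 1 → 0 ≤ d t := by
    intro t h0 h1
    have h2 : 0 ≤ t ^ (p - 1) := Real.rpow_nonneg h0 _
    have h3 : 0 ≤ (1 - t) ^ (-p) := Real.rpow_nonneg (by linarith) _
    have := hΓ
    positivity
  have hbeta : betaMeasure p (1 - p)
      = (volume.restrict (Icc (0:ℝ) 1)).withDensity (fun t => ENNReal.ofReal (d t)) := by
    unfold betaMeasure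
    congr 1
    funext t
    rw [hddef]
    congr 3
    ring
  -- interval integrability of the density on [0,1]
  have hii01 : IntervalIntegrable d volume 0 1 := by
    have h1 : IntervalIntegrable d volume 0 (1/2) := by
      apply IntervalIntegrable.div_const
      apply IntervalIntegrable.mul_continuousOn
        (intervalIntegral.intervalIntegrable_rpow' (by linarith))
      intro t ht
      rw [uIcc_of_le (by norm_num)] at ht
      have : (1:ℝ) - t ≠ 0 := by rcases ht with ⟨ha, hb⟩; intro h; nlinarith
      exact ((Real.continuousAt_rpow_const (1 - t) (-p) (Or.inl this)).comp
        (by fun_prop)).continuousWithinAt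
    have h2 : IntervalIntegrable d volume (1/2) 1 := by
      apply IntervalIntegrable.div_const
      apply IntervalIntegrable.continuousOn_mul (g := fun t : ℝ => t ^ (p - 1))
        (f := fun t : ℝ => (1 - t) ^ (-p)) ?_ ?_
      · have h := (intervalIntegral.intervalIntegrable_rpow' (a := 1/2) (b := 0) (r := -p)
          (by linarith)).comp_sub_left 1
        norm_num at h
        exact h
      · intro t ht
        rw [uIcc_of_le (by norm_num)] at ht
        exact (Real.continuousAt_rpow_const t (p - 1)
          (Or.inl (by rcases ht with ⟨ha, hb⟩; intro h; nlinarith))).continuousWithinAt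
    exact h1.trans h2
  haveI : IsFiniteMeasure (betaMeasure p (1 - p)) := by
    rw [hbeta]
    constructor
    rw [withDensity_apply _ MeasurableSet.univ, Measure.restrict_univ]
    have hint : Integrable d (volume.restrict (Icc (0:ℝ) 1)) := by
      rw [← IntegrableOn, ← intervalIntegrable_iff_integrableOn_Icc_of_le zero_le_one]
      exact hii01
    exact hint.lintegral_lt_top
  haveI : IsFiniteMeasure (bernoulliMeasure p) := by
    constructor
    simp only [bernoulliMeasure, Measure.add_apply, Measure.smul_apply, smul_eq_mul,
      measure_univ, mul_one]
    rw [← ENNReal.ofReal_add hp0.le (by linarith)]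
    exact ENNReal.ofReal_lt_top
  haveI : IsFiniteMeasure (volume.restrict (Icc (0:ℝ) 1)) := by
    constructor
    simp [Real.volume_Icc]
  have hφ : Measurable (fun q : ℝ × ℝ × ℝ => q.1 * q.2.1 + (1 - q.1) * q.2.2) := by fun_prop
  haveI : IsFiniteMeasure (Measure.map (fun q : ℝ × ℝ × ℝ => q.1 * q.2.1 + (1 - q.1) * q.2.2)
      ((volume.restrict (Set.Icc (0:ℝ) 1)).prod
        ((bernoulliMeasure p).prod (betaMeasure p (1 - p))))) := by
    constructor
    rw [Measure.map_apply hφ MeasurableSet.univ, preimage_univ]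
    exact measure_lt_top _ _
  refine Measure.ext_of_Iic _ _ fun x => ?_
  rw [Measure.map_apply hφ measurableSet_Iic]
  have hSm : MeasurableSet ((fun q : ℝ × ℝ × ℝ => q.1 * q.2.1 + (1 - q.1) * q.2.2) ⁻¹' Iic x) :=
    hφ measurableSet_Iic
  rw [Measure.prod_apply_symm hSm,
    lintegral_prod _ (measurable_measure_prodMk_right hSm).aemeasurable]
  rw [bernoulliMeasure, lintegral_add_measure, lintegral_smul_measure, lintegral_smul_measure,
    lintegral_dirac, lintegral_dirac]
  simp only [preimage_preimage, smul_eq_mul, mul_one, mul_zero, zero_add]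
  rw [hbeta,
    lintegral_withDensity_eq_lintegral_mul_non_measurable _ hdm.ennreal_ofReal
      (ae_of_all _ fun t => ENNReal.ofReal_lt_top),
    lintegral_withDensity_eq_lintegral_mul_non_measurable _ hdm.ennreal_ofReal
      (ae_of_all _ fun t => ENNReal.ofReal_lt_top),
    withDensity_apply _ measurableSet_Iic, Measure.restrict_restrict measurableSet_Iic]
  simp only [Pi.mul_apply]
  rw [← Measure.restrict_congr_set Ioo_ae_eq_Icc]
  rcases lt_or_ge x 0 with hx | hx0
  · -- x < 0 : both sides are zero
    have hRHS : Iic x ∩ Icc (0:ℝ) 1 = ∅ := by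
      ext v
      simp only [mem_inter_iff, mem_Iic, mem_Icc, mem_empty_iff_false, iff_false, not_and]
      intro h1 h2
      linarith
    rw [hRHS]
    have h1 : ∀ t ∈ Ioo (0:ℝ) 1,
        ENNReal.ofReal (d t) *
          (volume.restrict (Ioo 0 1)) ((fun v => v + (1 - v) * t) ⁻¹' Iic x)
          = (fun _ : ℝ => (0:ℝ≥0∞)) t := by
      intro t ht
      have hempty : (fun v => v + (1 - v) * t) ⁻¹' Iic x ∩ Ioo (0:ℝ) 1 = ∅ := by
        ext v
        simp only [mem_inter_iff, mem_preimage, mem_Iic, mem_Ioo, mem_empty_iff_false, iff_false,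
          not_and]
        intro hv h0 h1
        nlinarith [ht.1, ht.2]
      rw [Measure.restrict_apply' measurableSet_Ioo, hempty, measure_empty, mul_zero]
    have h2 : ∀ t ∈ Ioo (0:ℝ) 1,
        ENNReal.ofReal (d t) *
          (volume.restrict (Ioo 0 1)) ((fun v => (1 - v) * t) ⁻¹' Iic x)
          = (fun _ : ℝ => (0:ℝ≥0∞)) t := by
      intro t ht
      have hempty : (fun v => (1 - v) * t) ⁻¹' Iic x ∩ Ioo (0:ℝ) 1 = ∅ := by
        ext v
        simp only [mem_inter_iff, mem_preimage, mem_Iic, mem_Ioo, mem_empty_iff_false, iff_false,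
          not_and]
        intro hv h0 h1
        nlinarith [ht.1, ht.2]
      rw [Measure.restrict_apply' measurableSet_Ioo, hempty, measure_empty, mul_zero]
    rw [setLIntegral_congr_fun measurableSet_Ioo h1,
      setLIntegral_congr_fun measurableSet_Ioo h2]
    simp
  rcases lt_or_ge x 1 with hx1 | hx1
  · -- main case : 0 ≤ x < 1
    have hx1' : (0:ℝ) < 1 - x := by linarith
    have hRHS : Iic x ∩ Icc (0:ℝ) 1 = Icc 0 x := by
      ext v
      simp only [mem_inter_iff, mem_Iic, mem_Icc]
      constructor
      · rintro ⟨h1, h2, h3⟩; exact ⟨h2, h1⟩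
      · rintro ⟨h1, h2⟩; exact ⟨h2, h1, h2.trans hx1.le⟩
    rw [hRHS, ← Measure.restrict_congr_set Ioc_ae_eq_Icc]
    -- rewrite the two sections
    have hsec1 : ∀ t ∈ Ioo (0:ℝ) 1,
        ENNReal.ofReal (d t) *
          (volume.restrict (Ioo 0 1)) ((fun v => v + (1 - v) * t) ⁻¹' Iic x)
          = (fun t => ENNReal.ofReal (d t) * ENNReal.ofReal ((x - t) / (1 - t))) t := by
      intro t ht
      have h1t : (0:ℝ) < 1 - t := by linarith [ht.2]
      congr 1
      have hm1 : (x - t) / (1 - t) < 1 := by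
        rw [div_lt_one h1t]; linarith
      have hset : (fun v => v + (1 - v) * t) ⁻¹' Iic x = Iic ((x - t) / (1 - t)) := by
        ext v
        simp only [mem_preimage, mem_Iic]
        rw [le_div_iff₀ h1t]
        constructor <;> intro h <;> nlinarith
      have hinter : Iic ((x - t) / (1 - t)) ∩ Ioo (0:ℝ) 1 = Ioc 0 ((x - t) / (1 - t)) := by
        ext v
        simp only [mem_inter_iff, mem_Iic, mem_Ioo, mem_Ioc]
        constructor
        · rintro ⟨h1, h2, h3⟩; exact ⟨h2, h1⟩
        · rintro ⟨h1, h2⟩; exact ⟨h2, h1, h2.trans_lt hm1⟩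
      rw [hset, Measure.restrict_apply' measurableSet_Ioo, hinter, Real.volume_Ioc, sub_zero]
    have hsec2 : ∀ t ∈ Ioo (0:ℝ) 1,
        ENNReal.ofReal (d t) *
          (volume.restrict (Ioo 0 1)) ((fun v => (1 - v) * t) ⁻¹' Iic x)
          = (fun t => ENNReal.ofReal (d t) * ENNReal.ofReal (1 - max (1 - x / t) 0)) t := by
      intro t ht
      have ht0 := ht.1
      congr 1
      have hset : (fun v => (1 - v) * t) ⁻¹' Iic x = Ici (1 - x / t) := by
        ext v
        simp only [mem_preimage, mem_Iic, mem_Ici]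
        constructor
        · intro h
          have := (le_div_iff₀ ht0).2 h
          linarith
        · intro h
          have h' : 1 - v ≤ x / t := by linarith
          exact (le_div_iff₀ ht0).1 h'
      rw [hset, Measure.restrict_apply' measurableSet_Ioo]
      rcases le_or_gt (1 - x / t) 0 with ha | ha
      · have hinter : Ici (1 - x / t) ∩ Ioo (0:ℝ) 1 = Ioo 0 1 :=
          inter_eq_right.mpr (fun v hv => le_trans ha hv.1.le)
        rw [hinter, Real.volume_Ioo, max_eq_right ha]
      · have hinter : Ici (1 - x / t) ∩ Ioo (0:ℝ) 1 = Ico (1 - x / t) 1 := by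
          ext v
          simp only [mem_inter_iff, mem_Ici, mem_Ioo, mem_Ico]
          constructor
          · rintro ⟨h1, h2, h3⟩; exact ⟨h1, h3⟩
          · rintro ⟨h1, h2⟩; exact ⟨h1, lt_of_lt_of_le ha h1, h2⟩
        rw [hinter, Real.volume_Ico, max_eq_left ha.le]
    rw [setLIntegral_congr_fun measurableSet_Ioo hsec1,
      setLIntegral_congr_fun measurableSet_Ioo hsec2]
    -- split the domain at x
    have hdisj : Disjoint (Ioc (0:ℝ) x) (Ioo x 1) := by
      rw [Set.disjoint_left]
      rintro a ⟨ha1, ha2⟩ ⟨ha3, ha4⟩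
      exact absurd ha3 (not_lt.2 ha2)
    rw [← Ioc_union_Ioo_eq_Ioo hx0 hx1, lintegral_union measurableSet_Ioo hdisj,
      lintegral_union measurableSet_Ioo hdisj]
    -- the first integral over (x,1) vanishes
    have hA2 : ∫⁻ t in Ioo x 1, ENNReal.ofReal (d t) * ENNReal.ofReal ((x - t) / (1 - t))
        = 0 := by
      rw [setLIntegral_congr_fun measurableSet_Ioo
        (fun t (ht : t ∈ Ioo x 1) => ?_), lintegral_zero]
      show ENNReal.ofReal (d t) * ENNReal.ofReal ((x - t) / (1 - t)) = (fun _ : ℝ => (0:ℝ≥0∞)) t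
      have : (x - t) / (1 - t) ≤ 0 :=
        div_nonpos_iff.mpr (Or.inr ⟨by linarith [ht.1], by linarith [ht.2]⟩)
      rw [ENNReal.ofReal_eq_zero.2 this, mul_zero]
    -- the second integral over (0,x] is the full mass integral
    have hB1 : ∫⁻ t in Ioc 0 x, ENNReal.ofReal (d t) * ENNReal.ofReal (1 - max (1 - x / t) 0)
        = ∫⁻ t in Ioc 0 x, ENNReal.ofReal (d t) := by
      refine setLIntegral_congr_fun measurableSet_Ioc (fun t ht => ?_)
      have h1 : 1 ≤ x / t := (one_le_div ht.1).2 ht.2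
      rw [max_eq_right (by linarith), sub_zero, ENNReal.ofReal_one, mul_one]
    -- the second integral over (x,1) in convenient form
    have hB2 : ∫⁻ t in Ioo x 1, ENNReal.ofReal (d t) * ENNReal.ofReal (1 - max (1 - x / t) 0)
        = ∫⁻ t in Ioo x 1, ENNReal.ofReal (d t) * ENNReal.ofReal (x / t) := by
      refine setLIntegral_congr_fun measurableSet_Ioo (fun t ht => ?_)
      have ht0 : (0:ℝ) < t := lt_of_le_of_lt hx0 ht.1
      have h1 : x / t < 1 := (div_lt_one ht0).2 ht.1
      rw [max_eq_left (by linarith), _root_.sub_sub_cancel]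
    rw [hA2, add_zero, hB1, hB2]
    -- key integral evaluations
    have hgAnn : ∀ t ∈ Ioc (0:ℝ) x, 0 ≤ p * (t ^ (p - 1) * (1 - t) ^ (-p - 1)) := by
      intro t ht
      have h2 : 0 ≤ t ^ (p - 1) := Real.rpow_nonneg ht.1.le _
      have h3 : 0 ≤ (1 - t) ^ (-p - 1) := Real.rpow_nonneg (by linarith [ht.2]) _
      positivity
    have hintA : IntegrableOn (fun t => p * (t ^ (p - 1) * (1 - t) ^ (-p - 1))) (Ioc 0 x)
        volume := by
      rw [← intervalIntegrable_iff_integrableOn_Ioc_of_le hx0]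
      exact (iiA hp0 hx0 hx1).const_mul p
    have keyA : (∫⁻ t in Ioc (0:ℝ) x, ENNReal.ofReal (p * (t ^ (p - 1) * (1 - t) ^ (-p - 1))))
        = ENNReal.ofReal (x ^ p * (1 - x) ^ (-p)) := by
      rw [← ofReal_integral_eq_lintegral_ofReal hintA
          (ae_restrict_of_forall_mem measurableSet_Ioc hgAnn),
        ← intervalIntegral.integral_of_le hx0, ftcA hp0 hx0 hx1]
    have keyAB : ENNReal.ofReal ((1 - x) / c) *
          ∫⁻ t in Ioc (0:ℝ) x, ENNReal.ofReal (p * (t ^ (p - 1) * (1 - t) ^ (-p - 1)))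
        = ENNReal.ofReal (x ^ p * (1 - x) ^ (1 - p) / c) := by
      rw [keyA, ← ENNReal.ofReal_mul (div_nonneg (by linarith) hΓ.le)]
      congr 1
      have h2 : (1 - x) ^ (1 - p) = (1 - x) ^ (-p) * (1 - x) := by
        rw [← Real.rpow_add_one hx1'.ne' (-p)]; congr 1; ring
      rw [h2]
      ring
    have hmeasA : Measurable fun t : ℝ => ENNReal.ofReal p *
        (ENNReal.ofReal (d t) * ENNReal.ofReal ((x - t) / (1 - t))) := by fun_prop
    have key1 : ENNReal.ofReal p * (∫⁻ t in Ioc (0:ℝ) x,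
          ENNReal.ofReal (d t) * ENNReal.ofReal ((x - t) / (1 - t)))
        + ENNReal.ofReal ((1 - x) / c) *
            ∫⁻ t in Ioc (0:ℝ) x, ENNReal.ofReal (p * (t ^ (p - 1) * (1 - t) ^ (-p - 1)))
        = ENNReal.ofReal p * ∫⁻ t in Ioc (0:ℝ) x, ENNReal.ofReal (d t) := by
      rw [← lintegral_const_mul' _ _ ENNReal.ofReal_ne_top,
        ← lintegral_const_mul' _ _ ENNReal.ofReal_ne_top,
        ← lintegral_const_mul' _ _ ENNReal.ofReal_ne_top,
        ← lintegral_add_left hmeasA]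
      refine setLIntegral_congr_fun measurableSet_Ioc (fun t ht => ?_)
      have ht0 : (0:ℝ) < t := ht.1
      have h1t : (0:ℝ) < 1 - t := by linarith [ht.2]
      have hdt : 0 ≤ d t := hdnn t ht0.le (by linarith [ht.2])
      have hfrac : 0 ≤ (x - t) / (1 - t) := div_nonneg (by linarith [ht.2]) h1t.le
      rw [← ENNReal.ofReal_mul hdt, ← ENNReal.ofReal_mul hp0.le,
        ← ENNReal.ofReal_mul (div_nonneg (by linarith : (0:ℝ) ≤ 1 - x) hΓ.le),
        ← ENNReal.ofReal_mul hp0.le,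
        ← ENNReal.ofReal_add (by positivity) (mul_nonneg (div_nonneg (by linarith) hΓ.le)
          (hgAnn t ht))]
      congr 1
      have hE : (1 - t) ^ (-p - 1) = (1 - t) ^ (-p) * (1 - t)⁻¹ := by
        rw [show -p - 1 = -p + (-1) by ring, Real.rpow_add h1t, Real.rpow_neg_one]
      simp only [hddef]
      rw [hE]
      field_simp
      ring
    have keyB : ENNReal.ofReal (1 - p) *
          (∫⁻ t in Ioo x 1, ENNReal.ofReal (d t) * ENNReal.ofReal (x / t))
        = ENNReal.ofReal (x ^ p * (1 - x) ^ (1 - p) / c) := by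
      rcases eq_or_lt_of_le hx0 with hx0' | hx0'
      · rw [← hx0']
        simp [Real.zero_rpow hp0.ne']
      · have step : ∀ t ∈ Ioo x 1,
            ENNReal.ofReal (1 - p) * (ENNReal.ofReal (d t) * ENNReal.ofReal (x / t))
            = (fun t => ENNReal.ofReal (x / c) *
                ENNReal.ofReal ((1 - p) * (t ^ (p - 2) * (1 - t) ^ (-p)))) t := by
          intro t ht
          show ENNReal.ofReal (1 - p) * (ENNReal.ofReal (d t) * ENNReal.ofReal (x / t))
            = ENNReal.ofReal (x / c) * ENNReal.ofReal ((1 - p) * (t ^ (p - 2) * (1 - t) ^ (-p)))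
          have ht0 : (0:ℝ) < t := hx0'.trans ht.1
          have h1t : (0:ℝ) < 1 - t := by linarith [ht.2]
          have hdt : 0 ≤ d t := hdnn t ht0.le (by linarith [ht.2])
          rw [← ENNReal.ofReal_mul hdt, ← ENNReal.ofReal_mul (by linarith : (0:ℝ) ≤ 1 - p),
            ← ENNReal.ofReal_mul (div_nonneg hx0'.le hΓ.le)]
          congr 1
          have hE : t ^ (p - 2) = t ^ (p - 1) * t⁻¹ := by
            rw [show p - 2 = p - 1 + (-1) by ring, Real.rpow_add ht0, Real.rpow_neg_one]
          simp only [hddef]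
          rw [hE]
          ring
        have hnnB : ∀ t ∈ Ioc x (1:ℝ), 0 ≤ (1 - p) * (t ^ (p - 2) * (1 - t) ^ (-p)) := by
          intro t ht
          have h2 : 0 ≤ t ^ (p - 2) := Real.rpow_nonneg (le_trans hx0'.le ht.1.le) _
          have h3 : 0 ≤ (1 - t) ^ (-p) := Real.rpow_nonneg (by linarith [ht.2]) _
          have h4 : (0:ℝ) ≤ 1 - p := by linarith
          positivity
        have hintB : IntegrableOn (fun t => (1 - p) * (t ^ (p - 2) * (1 - t) ^ (-p)))
            (Ioc x 1) volume := by
          rw [← intervalIntegrable_iff_integrableOn_Ioc_of_le hx1.le]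
          exact (iiB hp1 hx0' hx1).const_mul (1 - p)
        rw [← lintegral_const_mul' _ _ ENNReal.ofReal_ne_top,
          setLIntegral_congr_fun measurableSet_Ioo step,
          lintegral_const_mul' _ _ ENNReal.ofReal_ne_top,
          Measure.restrict_congr_set Ioo_ae_eq_Ioc,
          ← ofReal_integral_eq_lintegral_ofReal hintB
            (ae_restrict_of_forall_mem measurableSet_Ioc hnnB),
          ← intervalIntegral.integral_of_le hx1.le, ftcB hp1 hx0' hx1,
          ← ENNReal.ofReal_mul (div_nonneg hx0'.le hΓ.le)]
        congr 1
        have h2 : x ^ p = x ^ (p - 1) * x := by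
          rw [← Real.rpow_add_one hx0'.ne' (p - 1)]; congr 1; ring
        rw [h2]
        ring
    rw [mul_add, keyB, ← keyAB]
    have hre : ∀ A B C : ℝ≥0∞, A + (B + C) = (A + C) + B := fun A B C => by ring
    rw [hre, key1, ← add_mul, ← ENNReal.ofReal_add hp0.le (by linarith),
      show p + (1 - p) = 1 by ring, ENNReal.ofReal_one, one_mul]
  · -- case 1 ≤ x
    have hRHS : Iic x ∩ Icc (0:ℝ) 1 = Icc 0 1 := by
      ext v
      simp only [mem_inter_iff, mem_Iic, mem_Icc]
      constructor
      · rintro ⟨h1, h2⟩; exact h2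
      · intro h; exact ⟨h.2.trans hx1, h⟩
    rw [hRHS, ← Measure.restrict_congr_set Ioo_ae_eq_Icc]
    have h1 : ∀ t ∈ Ioo (0:ℝ) 1,
        ENNReal.ofReal (d t) *
          (volume.restrict (Ioo 0 1)) ((fun v => v + (1 - v) * t) ⁻¹' Iic x)
          = (fun t => ENNReal.ofReal (d t)) t := by
      intro t ht
      have hfull : (fun v => v + (1 - v) * t) ⁻¹' Iic x ∩ Ioo (0:ℝ) 1 = Ioo 0 1 := by
        refine inter_eq_right.mpr fun v hv => ?_
        simp only [mem_preimage, mem_Iic]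
        nlinarith [ht.1, ht.2, hv.1, hv.2]
      rw [Measure.restrict_apply' measurableSet_Ioo, hfull, Real.volume_Ioo]
      norm_num
    have h2 : ∀ t ∈ Ioo (0:ℝ) 1,
        ENNReal.ofReal (d t) *
          (volume.restrict (Ioo 0 1)) ((fun v => (1 - v) * t) ⁻¹' Iic x)
          = (fun t => ENNReal.ofReal (d t)) t := by
      intro t ht
      have hfull : (fun v => (1 - v) * t) ⁻¹' Iic x ∩ Ioo (0:ℝ) 1 = Ioo 0 1 := by
        refine inter_eq_right.mpr fun v hv => ?_
        simp only [mem_preimage, mem_Iic]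
        nlinarith [ht.1, ht.2, hv.1, hv.2]
      rw [Measure.restrict_apply' measurableSet_Ioo, hfull, Real.volume_Ioo]
      norm_num
    rw [setLIntegral_congr_fun measurableSet_Ioo h1,
      setLIntegral_congr_fun measurableSet_Ioo h2,
      ← add_mul, ← ENNReal.ofReal_add hp0.le (by linarith)]
    norm_num
end

section
/- Let p ∈ (0,1). If ρ is a probability measure on [0,1] such that the pushforward of (Lebesgue measure on [0,1]) ⊗ Bernoulli(p) ⊗ ρ under the map (v, b, x) ↦ v·b + (1−v)·x equals ρ, then ρ = β(p,1−p). That is, β(p,1−p) is the unique probability measure on [0,1] fixed by this distributional transformation. -/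
open MeasureTheory Polynomial
open scoped ENNReal NNReal

lemma integrable_of_ae_Icc {μ : Measure ℝ} [IsFiniteMeasure μ]
    (hμ : ∀ᵐ x ∂μ, x ∈ Set.Icc (0:ℝ) 1) {g : ℝ → ℝ} (hg : Continuous g) :
    Integrable g μ := by
  obtain ⟨C, hC⟩ := (isCompact_Icc (a := (0:ℝ)) (b := 1)).exists_bound_of_continuousOn
    hg.continuousOn
  exact Integrable.mono' (integrable_const C) hg.aestronglyMeasurable
    (hμ.mono fun x hx => hC x hx)

lemma integral_poly_eq {μ ν : Measure ℝ} [IsFiniteMeasure μ] [IsFiniteMeasure ν]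
    (hμ : ∀ᵐ x ∂μ, x ∈ Set.Icc (0:ℝ) 1) (hν : ∀ᵐ x ∂ν, x ∈ Set.Icc (0:ℝ) 1)
    (h : ∀ n : ℕ, ∫ x, x ^ n ∂μ = ∫ x, x ^ n ∂ν) (P : ℝ[X]) :
    ∫ x, P.eval x ∂μ = ∫ x, P.eval x ∂ν := by
  have e : ∀ x : ℝ, P.eval x = ∑ i ∈ Finset.range (P.natDegree + 1), P.coeff i * x ^ i :=
    fun x => eval_eq_sum_range (p := P) x
  simp only [e]
  rw [integral_finset_sum _ (fun i _ =>
        (integrable_of_ae_Icc hμ (continuous_pow i)).const_mul _),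
      integral_finset_sum _ (fun i _ =>
        (integrable_of_ae_Icc hν (continuous_pow i)).const_mul _)]
  refine Finset.sum_congr rfl fun i _ => ?_
  rw [integral_const_mul, integral_const_mul, h i]

lemma ext_of_moments (μ ν : Measure ℝ) [IsProbabilityMeasure μ] [IsProbabilityMeasure ν]
    (hμ : μ (Set.Icc (0:ℝ) 1)ᶜ = 0) (hν : ν (Set.Icc (0:ℝ) 1)ᶜ = 0)
    (h : ∀ n : ℕ, ∫ x, x ^ n ∂μ = ∫ x, x ^ n ∂ν) : μ = ν := by
  have hμae : ∀ᵐ x ∂μ, x ∈ Set.Icc (0:ℝ) 1 := mem_ae_iff.mpr hμ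
  have hνae : ∀ᵐ x ∂ν, x ∈ Set.Icc (0:ℝ) 1 := mem_ae_iff.mpr hν
  have key : ∀ g : ℝ → ℝ, Continuous g → ∫ x, g x ∂μ = ∫ x, g x ∂ν := by
    intro g hg
    have main : ∀ ε : ℝ, 0 < ε → |(∫ x, g x ∂μ) - ∫ x, g x ∂ν| ≤ 2 * ε := by
      intro ε hε
      -- Weierstrass approximation on [0,1]
      set G : C(Set.Icc (0:ℝ) 1, ℝ) := (ContinuousMap.mk g hg).restrict (Set.Icc (0:ℝ) 1)
      have hGmem : G ∈ closure (polynomialFunctions (Set.Icc (0:ℝ) 1) : Set C(Set.Icc (0:ℝ) 1, ℝ)) := by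
        rw [← Subalgebra.topologicalClosure_coe, polynomialFunctions_closure_eq_top 0 1]
        exact Set.mem_univ _
      obtain ⟨q, hq, hdist⟩ := Metric.mem_closure_iff.mp hGmem ε hε
      rw [polynomialFunctions_coe] at hq
      obtain ⟨P, rfl⟩ := hq
      have hbound : ∀ x ∈ Set.Icc (0:ℝ) 1, |g x - P.eval x| ≤ ε := by
        intro x hx
        have := ContinuousMap.dist_apply_le_dist (f := G)
          (g := Polynomial.toContinuousMapOnAlgHom (Set.Icc (0:ℝ) 1) P) ⟨x, hx⟩
        have h2 : dist (g x) (P.eval x) ≤ dist G (Polynomial.toContinuousMapOnAlgHom (Set.Icc (0:ℝ) 1) P) := by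
          simpa [G] using this
        calc |g x - P.eval x| = dist (g x) (P.eval x) := (Real.dist_eq _ _).symm
          _ ≤ _ := h2
          _ ≤ ε := le_of_lt hdist
      have hPint : ∫ x, P.eval x ∂μ = ∫ x, P.eval x ∂ν :=
        integral_poly_eq hμae hνae h P
      have hgint : Integrable g μ := integrable_of_ae_Icc hμae hg
      have hgint' : Integrable g ν := integrable_of_ae_Icc hνae hg
      have hPintg : Integrable (fun x => P.eval x) μ :=
        integrable_of_ae_Icc hμae P.continuous_aeval
      have hPintg' : Integrable (fun x => P.eval x) ν :=
        integrable_of_ae_Icc hνae P.continuous_aeval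
      have b1 : |(∫ x, g x ∂μ) - ∫ x, P.eval x ∂μ| ≤ ε := by
        rw [← integral_sub hgint hPintg]
        have := norm_integral_le_of_norm_le_const (μ := μ)
          (f := fun x => g x - P.eval x) (C := ε)
          (hμae.mono fun x hx => by simpa [Real.norm_eq_abs] using hbound x hx)
        simpa [Real.norm_eq_abs, measure_univ] using this
      have b2 : |(∫ x, g x ∂ν) - ∫ x, P.eval x ∂ν| ≤ ε := by
        rw [← integral_sub hgint' hPintg']
        have := norm_integral_le_of_norm_le_const (μ := ν)
          (f := fun x => g x - P.eval x) (C := ε)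
          (hνae.mono fun x hx => by simpa [Real.norm_eq_abs] using hbound x hx)
        simpa [Real.norm_eq_abs, measure_univ] using this
      have split : (∫ x, g x ∂μ) - ∫ x, g x ∂ν =
          ((∫ x, g x ∂μ) - ∫ x, P.eval x ∂μ) + ((∫ x, P.eval x ∂ν) - ∫ x, g x ∂ν) := by
        rw [hPint]; ring
      rw [split]
      calc |((∫ x, g x ∂μ) - ∫ x, P.eval x ∂μ) + ((∫ x, P.eval x ∂ν) - ∫ x, g x ∂ν)|
          ≤ |(∫ x, g x ∂μ) - ∫ x, P.eval x ∂μ| + |(∫ x, P.eval x ∂ν) - ∫ x, g x ∂ν| :=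
            abs_add_le _ _
        _ ≤ ε + ε := add_le_add b1 (by rw [abs_sub_comm]; exact b2)
        _ = 2 * ε := by ring
    by_contra hne
    have hd : 0 < |(∫ x, g x ∂μ) - ∫ x, g x ∂ν| :=
      abs_pos.mpr (sub_ne_zero.mpr hne)
    have := main (|(∫ x, g x ∂μ) - ∫ x, g x ∂ν| / 4) (by linarith)
    linarith
  apply ext_of_forall_lintegral_eq_of_IsFiniteMeasure
  intro f
  have hci : Continuous fun x => (f x : ℝ) := NNReal.continuous_coe.comp f.continuous
  rw [lintegral_coe_eq_integral f (integrable_of_ae_Icc hμae hci),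
      lintegral_coe_eq_integral f (integrable_of_ae_Icc hνae hci),
      key _ hci]


lemma complex_beta_eq (a b : ℝ) (ha : 0 < a) (hb : 0 < b) :
    Complex.betaIntegral (a : ℂ) (b : ℂ) =
      ((∫ x in (0:ℝ)..1, x ^ (a-1) * (1-x) ^ (b-1)) : ℝ) := by
  rw [Complex.betaIntegral, ← intervalIntegral.integral_ofReal]
  apply intervalIntegral.integral_congr
  intro x hx
  rw [Set.uIcc_of_le (by norm_num : (0:ℝ) ≤ 1)] at hx
  show (x:ℂ) ^ ((a:ℂ) - 1) * (1 - (x:ℂ)) ^ ((b:ℂ) - 1) = ((x ^ (a-1) * (1-x) ^ (b-1) : ℝ) : ℂ)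
  have HX1 : (0:ℝ) ≤ x := hx.1
  have HX2 : (0:ℝ) ≤ 1 - x := by linarith [hx.2]
  rw [show ((a:ℂ) - 1) = ((a-1 : ℝ) : ℂ) by push_cast; ring,
      show ((b:ℂ) - 1) = ((b-1 : ℝ) : ℂ) by push_cast; ring,
      show (1 - (x:ℂ)) = ((1 - x : ℝ) : ℂ) by push_cast; ring,
      ← Complex.ofReal_cpow HX1, ← Complex.ofReal_cpow HX2]
  push_cast
  ring

lemma realBeta {a b : ℝ} (ha : 0 < a) (hb : 0 < b) :
    ∫ x in (0:ℝ)..1, x ^ (a-1) * (1-x) ^ (b-1)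
      = Real.Gamma a * Real.Gamma b / Real.Gamma (a+b) := by
  have key := Complex.Gamma_mul_Gamma_eq_betaIntegral
    (s := (a:ℂ)) (t := (b:ℂ)) (by simpa using ha) (by simpa using hb)
  rw [complex_beta_eq a b ha hb] at key
  rw [← Complex.ofReal_add, Complex.Gamma_ofReal, Complex.Gamma_ofReal, Complex.Gamma_ofReal] at key
  have key2 : Real.Gamma a * Real.Gamma b
      = Real.Gamma (a+b) * ∫ x in (0:ℝ)..1, x ^ (a-1) * (1-x) ^ (b-1) := by
    exact_mod_cast key
  have hG : Real.Gamma (a+b) ≠ 0 := (Real.Gamma_pos_of_pos (by linarith)).ne'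
  field_simp
  linarith [key2]

lemma betaIntegrableOn {a b : ℝ} (ha : 0 < a) (hb : 0 < b) :
    IntegrableOn (fun x : ℝ => x ^ (a-1) * (1-x) ^ (b-1)) (Set.Icc (0:ℝ) 1) volume := by
  rw [integrableOn_Icc_iff_integrableOn_Ioc]
  have h := Complex.betaIntegral_convergent (u := (a:ℂ)) (v := (b:ℂ))
    (by simpa using ha) (by simpa using hb)
  have h2 : IntegrableOn (fun x : ℝ => ((x:ℂ) ^ ((a:ℂ)-1) * (1-(x:ℂ)) ^ ((b:ℂ)-1)))
      (Set.Ioc (0:ℝ) 1) volume := by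
    rw [← intervalIntegrable_iff_integrableOn_Ioc_of_le (by norm_num : (0:ℝ) ≤ 1)]
    exact h
  have h3 : IntegrableOn (fun x : ℝ => ((x:ℂ) ^ ((a:ℂ)-1) * (1-(x:ℂ)) ^ ((b:ℂ)-1)).re)
      (Set.Ioc (0:ℝ) 1) volume := h2.re
  apply MeasureTheory.IntegrableOn.congr_fun h3 ?_ measurableSet_Ioc
  intro x hx
  show ((x:ℂ) ^ ((a:ℂ)-1) * (1-(x:ℂ)) ^ ((b:ℂ)-1)).re = x ^ (a-1) * (1-x) ^ (b-1)
  rw [show ((x:ℂ) ^ ((a:ℂ)-1) * (1-(x:ℂ)) ^ ((b:ℂ)-1))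
      = ((x ^ (a-1) * (1-x) ^ (b-1) : ℝ) : ℂ) by
    have HX1 : (0:ℝ) ≤ x := hx.1.le
    have HX2 : (0:ℝ) ≤ 1 - x := by linarith [hx.2]
    rw [show ((a:ℂ) - 1) = ((a-1 : ℝ) : ℂ) by push_cast; ring,
        show ((b:ℂ) - 1) = ((b-1 : ℝ) : ℂ) by push_cast; ring,
        show (1 - (x:ℂ)) = ((1 - x : ℝ) : ℂ) by push_cast; ring,
        ← Complex.ofReal_cpow HX1, ← Complex.ofReal_cpow HX2]
    push_cast; ring]
  simp



variable {p : ℝ} (hp0 : 0 < p) (hp1 : p < 1)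

lemma pow_mul_rpow_aux (hp0 : 0 < p) (n : ℕ) {x : ℝ} (hx : 0 ≤ x) :
    x ^ n * x ^ (p - 1) = x ^ (p + n - 1) := by
  rcases eq_or_lt_of_le hx with h | h
  · rcases Nat.eq_zero_or_pos n with hn | hn
    · subst hn; simp
    · rw [← h, zero_pow hn.ne', zero_mul,
        Real.zero_rpow (by
          have : (1:ℝ) ≤ (n:ℝ) := by exact_mod_cast hn
          nlinarith : p + (n:ℝ) - 1 ≠ 0)]
  · rw [← Real.rpow_natCast x n, ← Real.rpow_add h]
    ring_nf

lemma beta_core (hp0 : 0 < p) (hp1 : p < 1) (n : ℕ) :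
    ∫ x in Set.Icc (0:ℝ) 1, (x:ℝ) ^ n * (x ^ (p - 1) * (1 - x) ^ ((1 - p) - 1))
      = Real.Gamma (p + n) * Real.Gamma (1 - p) / (n.factorial : ℝ) := by
  rw [MeasureTheory.integral_Icc_eq_integral_Ioc,
      ← intervalIntegral.integral_of_le (by norm_num : (0:ℝ) ≤ 1)]
  have congr1 : ∫ x in (0:ℝ)..1, x ^ n * (x ^ (p - 1) * (1 - x) ^ ((1 - p) - 1))
      = ∫ x in (0:ℝ)..1, x ^ ((p + n) - 1) * (1 - x) ^ ((1 - p) - 1) := by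
    apply intervalIntegral.integral_congr
    intro x hx
    rw [Set.uIcc_of_le (by norm_num : (0:ℝ) ≤ 1)] at hx
    show x ^ n * (x ^ (p - 1) * (1 - x) ^ ((1 - p) - 1)) = _
    rw [← mul_assoc, pow_mul_rpow_aux hp0 n hx.1]
  rw [congr1, realBeta (by positivity) (by linarith : (0:ℝ) < 1 - p)]
  have : p + (n:ℝ) + (1 - p) = (n:ℝ) + 1 := by ring
  rw [this, Real.Gamma_nat_eq_factorial]

lemma betaMeasure_compl_null : betaMeasure p (1 - p) (Set.Icc (0:ℝ) 1)ᶜ = 0 := by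
  rw [betaMeasure, withDensity_apply _ measurableSet_Icc.compl,
      Measure.restrict_restrict measurableSet_Icc.compl]
  simp

lemma beta_dens_integrable (hp0 : 0 < p) (hp1 : p < 1) (n : ℕ) :
    IntegrableOn (fun x : ℝ => x ^ n * (x ^ (p - 1) * (1 - x) ^ ((1 - p) - 1)))
      (Set.Icc (0:ℝ) 1) volume := by
  have h := betaIntegrableOn (a := p + n) (b := 1 - p) (by positivity) (by linarith)
  apply h.congr_fun ?_ measurableSet_Icc
  intro x hx
  show x ^ ((p + n) - 1) * (1 - x) ^ ((1 - p) - 1) = _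
  rw [← pow_mul_rpow_aux hp0 n hx.1, mul_assoc]

lemma betaMeasure_isProb (hp0 : 0 < p) (hp1 : p < 1) :
    IsProbabilityMeasure (betaMeasure p (1 - p)) := by
  constructor
  rw [betaMeasure, withDensity_apply _ MeasurableSet.univ, Measure.restrict_univ]
  have hΓp : (0:ℝ) < Real.Gamma p := Real.Gamma_pos_of_pos hp0
  have hΓq : (0:ℝ) < Real.Gamma (1 - p) := Real.Gamma_pos_of_pos (by linarith)
  have hint : Integrable (fun x : ℝ => x ^ (p - 1) * (1 - x) ^ ((1 - p) - 1)
        / (Real.Gamma p * Real.Gamma (1 - p))) (volume.restrict (Set.Icc (0:ℝ) 1)) :=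
    ((beta_dens_integrable hp0 hp1 0).congr_fun (fun x hx => by simp) measurableSet_Icc).div_const _
  have hnn : 0 ≤ᶠ[ae (volume.restrict (Set.Icc (0:ℝ) 1))]
      fun x : ℝ => x ^ (p - 1) * (1 - x) ^ ((1 - p) - 1) / (Real.Gamma p * Real.Gamma (1 - p)) := by
    filter_upwards [ae_restrict_mem measurableSet_Icc] with x hx
    have h1 : (0:ℝ) ≤ x ^ (p - 1) := Real.rpow_nonneg hx.1 _
    have h2 : (0:ℝ) ≤ (1 - x) ^ ((1 - p) - 1) := Real.rpow_nonneg (by linarith [hx.2]) _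
    positivity
  rw [← ofReal_integral_eq_lintegral_ofReal hint hnn]
  have : ∫ x in Set.Icc (0:ℝ) 1, x ^ (p - 1) * (1 - x) ^ ((1 - p) - 1)
        / (Real.Gamma p * Real.Gamma (1 - p)) = 1 := by
    rw [integral_div]
    have h0 := beta_core hp0 hp1 0
    simp only [pow_zero, one_mul] at h0
    rw [h0]
    simp only [Nat.cast_zero, Nat.factorial_zero, Nat.cast_one, div_one, add_zero]
    field_simp
  rw [this]
  simp

lemma betaMeasure_moment (hp0 : 0 < p) (hp1 : p < 1) (n : ℕ) :
    ∫ x, x ^ n ∂(betaMeasure p (1 - p))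
      = Real.Gamma (p + n) / (Real.Gamma p * (n.factorial : ℝ)) := by
  have hΓp : (0:ℝ) < Real.Gamma p := Real.Gamma_pos_of_pos hp0
  have hΓq : (0:ℝ) < Real.Gamma (1 - p) := Real.Gamma_pos_of_pos (by linarith)
  set c : ℝ := Real.Gamma p * Real.Gamma (1 - p) with hc
  have hmeas : Measurable fun x : ℝ =>
      (x ^ (p - 1) * (1 - x) ^ ((1 - p) - 1) / c).toNNReal := by
    apply Measurable.real_toNNReal
    apply Measurable.div_const
    exact ((measurable_id.pow_const _).mul ((measurable_const.sub measurable_id).pow_const _))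
  have key : betaMeasure p (1 - p) = (volume.restrict (Set.Icc (0:ℝ) 1)).withDensity
      (fun x => ((x ^ (p - 1) * (1 - x) ^ ((1 - p) - 1) / c).toNNReal : ℝ≥0∞)) := rfl
  rw [key, integral_withDensity_eq_integral_smul hmeas]
  have : ∫ x in Set.Icc (0:ℝ) 1,
      ((x ^ (p - 1) * (1 - x) ^ ((1 - p) - 1) / c).toNNReal : ℝ≥0) • x ^ n
      = ∫ x in Set.Icc (0:ℝ) 1, (x ^ n * (x ^ (p - 1) * (1 - x) ^ ((1 - p) - 1))) / c := by
    apply setIntegral_congr_fun measurableSet_Icc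
    intro x hx
    have h1 : (0:ℝ) ≤ x ^ (p - 1) := Real.rpow_nonneg hx.1 _
    have h2 : (0:ℝ) ≤ (1 - x) ^ ((1 - p) - 1) := Real.rpow_nonneg (by linarith [hx.2]) _
    have hnn : (0:ℝ) ≤ x ^ (p - 1) * (1 - x) ^ ((1 - p) - 1) / c := by positivity
    show ((x ^ (p - 1) * (1 - x) ^ ((1 - p) - 1) / c).toNNReal : ℝ) • x ^ n = _
    rw [Real.coe_toNNReal _ hnn, smul_eq_mul]
    ring
  rw [this, integral_div, beta_core hp0 hp1 n]
  rw [hc]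
  field_simp

lemma I_ab (a b : ℕ) : ∫ x in (0:ℝ)..1, x ^ a * (1 - x) ^ b
    = (a.factorial * b.factorial : ℝ) / ((a + b + 1).factorial : ℝ) := by
  have h := realBeta (a := (a:ℝ) + 1) (b := (b:ℝ) + 1) (by positivity) (by positivity)
  have congr1 : ∫ x in (0:ℝ)..1, x ^ ((a:ℝ) + 1 - 1) * (1 - x) ^ ((b:ℝ) + 1 - 1)
      = ∫ x in (0:ℝ)..1, x ^ a * (1 - x) ^ b := by
    apply intervalIntegral.integral_congr
    intro x hx
    show x ^ ((a:ℝ) + 1 - 1) * (1 - x) ^ ((b:ℝ) + 1 - 1) = x ^ a * (1 - x) ^ b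
    rw [add_sub_cancel_right, add_sub_cancel_right, Real.rpow_natCast, Real.rpow_natCast]
  rw [congr1] at h
  rw [h, Real.Gamma_nat_eq_factorial, Real.Gamma_nat_eq_factorial]
  rw [show (a:ℝ) + 1 + ((b:ℝ) + 1) = ((a + b + 1 : ℕ) : ℝ) + 1 by push_cast; ring,
      Real.Gamma_nat_eq_factorial]

lemma bernoulli_isProb {p : ℝ} (hp0 : 0 ≤ p) (hp1 : p ≤ 1) :
    IsProbabilityMeasure (bernoulliMeasure p) := by
  constructor
  rw [bernoulliMeasure]
  simp only [Measure.add_apply, Measure.smul_apply, measure_univ, smul_eq_mul, mul_one]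
  rw [← ENNReal.ofReal_add hp0 (by linarith)]
  norm_num

lemma bernoulli_compl_null {p : ℝ} : bernoulliMeasure p (Set.Icc (0:ℝ) 1)ᶜ = 0 := by
  rw [bernoulliMeasure]
  simp only [Measure.add_apply, Measure.smul_apply]
  rw [Measure.dirac_apply' _ measurableSet_Icc.compl, Measure.dirac_apply' _ measurableSet_Icc.compl]
  rw [Set.indicator_of_notMem (by simp), Set.indicator_of_notMem (by simp)]
  simp

lemma integral_bern {p : ℝ} (hp0 : 0 ≤ p) (hp1 : p ≤ 1) (f : ℝ → ℝ) :
    ∫ b, f b ∂(bernoulliMeasure p) = p * f 1 + (1 - p) * f 0 := by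
  have hd : ∀ (a : ℝ), Integrable f (Measure.dirac a) := by
    intro a
    refine (integrable_const (f a)).congr ?_
    rw [ae_dirac_eq]
    exact Filter.eventually_pure.2 rfl
  have h1 : Integrable f ((ENNReal.ofReal p) • Measure.dirac (1:ℝ)) :=
    (hd 1).smul_measure ENNReal.ofReal_ne_top
  have h0 : Integrable f ((ENNReal.ofReal (1-p)) • Measure.dirac (0:ℝ)) :=
    (hd 0).smul_measure ENNReal.ofReal_ne_top
  rw [bernoulliMeasure, integral_add_measure h1 h0, integral_smul_measure, integral_smul_measure,
      integral_dirac, integral_dirac, ENNReal.toReal_ofReal hp0,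
      ENNReal.toReal_ofReal (by linarith : (0:ℝ) ≤ 1 - p)]
  simp [smul_eq_mul]

lemma prod_compl_null {α β : Type*} [MeasurableSpace α] [MeasurableSpace β]
    (μ : Measure α) (ν : Measure β) [SFinite ν] {s : Set α} {t : Set β}
    (hs : μ sᶜ = 0) (ht : ν tᶜ = 0) : μ.prod ν ((s ×ˢ t)ᶜ) = 0 := by
  rw [Set.compl_prod_eq_union]
  apply measure_union_null <;> rw [Measure.prod_prod] <;> simp [hs, ht]

lemma lam01_isProb : IsProbabilityMeasure (volume.restrict (Set.Icc (0:ℝ) 1)) := by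
  constructor
  rw [Measure.restrict_apply_univ, Real.volume_Icc]
  norm_num

lemma rho_recursion {p : ℝ} (hp0 : 0 < p) (hp1 : p < 1)
    (ρ : Measure ℝ) [IsProbabilityMeasure ρ] (hsupp : ρ (Set.Icc (0:ℝ) 1)ᶜ = 0)
    (hfix : Measure.map (fun q : ℝ × ℝ × ℝ => q.1 * q.2.1 + (1 - q.1) * q.2.2)
      ((volume.restrict (Set.Icc (0:ℝ) 1)).prod ((bernoulliMeasure p).prod ρ)) = ρ)
    (n : ℕ) :
    ((n:ℝ) + p) * ∫ x, x ^ n ∂ρ = p * ∑ k ∈ Finset.range (n+1), ∫ x, x ^ k ∂ρ := by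
  haveI hl : IsProbabilityMeasure (volume.restrict (Set.Icc (0:ℝ) 1)) := lam01_isProb
  haveI hb : IsProbabilityMeasure (bernoulliMeasure p) := bernoulli_isProb hp0.le hp1.le
  have hρae : ∀ᵐ x ∂ρ, x ∈ Set.Icc (0:ℝ) 1 := mem_ae_iff.mpr hsupp
  have hmint : ∀ k : ℕ, Integrable (fun x : ℝ => x ^ k) ρ :=
    fun k => integrable_of_ae_Icc hρae (continuous_pow k)
  set m : ℕ → ℝ := fun k => ∫ x, x ^ k ∂ρ with hm
  set T : ℝ × ℝ × ℝ → ℝ := fun q => q.1 * q.2.1 + (1 - q.1) * q.2.2 with hT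
  have hTc : Continuous T :=
    (continuous_fst.mul (continuous_fst.comp continuous_snd)).add
      ((continuous_const.sub continuous_fst).mul (continuous_snd.comp continuous_snd))
  set π : Measure (ℝ × ℝ × ℝ) :=
    (volume.restrict (Set.Icc (0:ℝ) 1)).prod ((bernoulliMeasure p).prod ρ) with hπ
  have hl_ae : volume.restrict (Set.Icc (0:ℝ) 1) (Set.Icc (0:ℝ) 1)ᶜ = 0 := by
    rw [Measure.restrict_apply measurableSet_Icc.compl]
    simp
  have hbern_null : bernoulliMeasure p (Set.Icc (0:ℝ) 1)ᶜ = 0 := bernoulli_compl_null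
  have hπmem : ∀ᵐ q ∂π, q ∈ (Set.Icc (0:ℝ) 1 ×ˢ (Set.Icc (0:ℝ) 1 ×ˢ Set.Icc (0:ℝ) 1)) :=
    mem_ae_iff.mpr (prod_compl_null _ _ hl_ae (prod_compl_null _ _ hbern_null hsupp))
  have hIcc : ∀ v b x : ℝ, v ∈ Set.Icc (0:ℝ) 1 → b ∈ Set.Icc (0:ℝ) 1 → x ∈ Set.Icc (0:ℝ) 1 →
      v * b + (1 - v) * x ∈ Set.Icc (0:ℝ) 1 := by
    intro v b x hv hb hx
    constructor
    · have h1 := mul_nonneg hv.1 hb.1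
      have h2 := mul_nonneg (by linarith [hv.2] : (0:ℝ) ≤ 1 - v) hx.1
      linarith
    · have h1 : v * b ≤ v * 1 := mul_le_mul_of_nonneg_left hb.2 hv.1
      have h2 : (1 - v) * x ≤ (1 - v) * 1 := mul_le_mul_of_nonneg_left hx.2 (by linarith [hv.2])
      linarith
  have hFint : Integrable (fun q => (T q) ^ n) π := by
    refine Integrable.mono' (integrable_const 1)
      ((hTc.pow n).aestronglyMeasurable) ?_
    filter_upwards [hπmem] with q hq
    have hmem := hIcc q.1 q.2.1 q.2.2 hq.1 hq.2.1 hq.2.2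
    rw [Real.norm_eq_abs, abs_pow, abs_of_nonneg hmem.1]
    exact pow_le_one₀ hmem.1 hmem.2
  have step1 : m n = ∫ q, (T q) ^ n ∂π := by
    rw [hm]
    simp only
    conv_lhs => rw [← hfix]
    exact integral_map hTc.aemeasurable (continuous_pow n).aestronglyMeasurable
  have step2 : ∫ q, (T q) ^ n ∂π
      = ∫ v in Set.Icc (0:ℝ) 1,
          (∫ w : ℝ × ℝ, (v * w.1 + (1 - v) * w.2) ^ n ∂((bernoulliMeasure p).prod ρ)) := by
    rw [hπ, integral_prod _ hFint]
  have hinner : ∀ v : ℝ, (∫ w : ℝ × ℝ, (v * w.1 + (1 - v) * w.2) ^ n ∂((bernoulliMeasure p).prod ρ))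
      = p * ∑ k ∈ Finset.range (n+1), ((1-v)^k * v^(n-k) * (n.choose k : ℝ)) * m k
        + (1-p) * ((1-v)^n * m n) := by
    intro v
    have hmem2 : ∀ᵐ w ∂((bernoulliMeasure p).prod ρ), w ∈ (Set.Icc (0:ℝ) 1 ×ˢ Set.Icc (0:ℝ) 1) :=
      mem_ae_iff.mpr (prod_compl_null _ _ hbern_null hsupp)
    have hIv : Integrable (fun w : ℝ × ℝ => (v * w.1 + (1 - v) * w.2) ^ n)
        ((bernoulliMeasure p).prod ρ) := by
      refine Integrable.mono' (integrable_const ((|v| + |1 - v|) ^ n)) ?_ ?_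
      · exact (((continuous_const.mul continuous_fst).add
          (continuous_const.mul continuous_snd)).pow n).aestronglyMeasurable
      · filter_upwards [hmem2] with w hw
        rw [Real.norm_eq_abs, abs_pow]
        apply pow_le_pow_left₀ (abs_nonneg _)
        calc |v * w.1 + (1-v) * w.2| ≤ |v * w.1| + |(1-v) * w.2| := abs_add_le _ _
          _ ≤ |v| * 1 + |1-v| * 1 := by
              rw [abs_mul, abs_mul]
              gcongr
              · exact abs_le.mpr ⟨by linarith [hw.1.1], hw.1.2⟩
              · exact abs_le.mpr ⟨by linarith [hw.2.1], hw.2.2⟩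
          _ = |v| + |1-v| := by ring
    rw [integral_prod _ hIv, integral_bern hp0.le hp1.le]
    congr 1
    · congr 1
      have e1 : ∀ x : ℝ, (v * 1 + (1 - v) * x) ^ n
          = ∑ k ∈ Finset.range (n+1), ((1-v)^k * v^(n-k) * (n.choose k : ℝ)) * x ^ k := by
        intro x
        rw [mul_one, add_comm, add_pow]
        refine Finset.sum_congr rfl fun k _ => ?_
        rw [mul_pow]; ring
      simp_rw [e1]
      rw [integral_finset_sum _ (fun k _ => (hmint k).const_mul _)]
      exact Finset.sum_congr rfl fun k _ => integral_const_mul _ _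
    · congr 1
      have e0 : ∀ x : ℝ, (v * 0 + (1 - v) * x) ^ n = (1-v)^n * x ^ n := by
        intro x; rw [mul_zero, zero_add, mul_pow]
      simp_rw [e0]
      exact integral_const_mul _ _
  have hmain : m n = ∫ v in (0:ℝ)..1,
      (p * ∑ k ∈ Finset.range (n+1), ((1-v)^k * v^(n-k) * (n.choose k : ℝ)) * m k
        + (1-p) * ((1-v)^n * m n)) := by
    conv_lhs => rw [step1, step2]
    simp_rw [hinner]
    rw [MeasureTheory.integral_Icc_eq_integral_Ioc,
        ← intervalIntegral.integral_of_le (by norm_num : (0:ℝ) ≤ 1)]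
  -- evaluate the interval integral
  have hn1 : ((n:ℝ) + 1) ≠ 0 := by positivity
  have hA : ∀ k ∈ Finset.range (n+1),
      ∫ v in (0:ℝ)..1, ((1-v)^k * v^(n-k) * (n.choose k : ℝ)) * m k
        = m k / ((n:ℝ) + 1) := by
    intro k hk
    have hkn : k ≤ n := Nat.lt_succ_iff.mp (Finset.mem_range.mp hk)
    have e : ∀ v : ℝ, ((1-v)^k * v^(n-k) * (n.choose k : ℝ)) * m k
        = (v^(n-k) * (1-v)^k) * ((n.choose k : ℝ) * m k) := fun v => by ring
    simp_rw [e]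
    rw [intervalIntegral.integral_mul_const, I_ab (n-k) k]
    have hsum : n - k + k + 1 = n + 1 := by omega
    rw [hsum]
    have hfact : ((n+1).factorial : ℝ) = ((n:ℝ)+1) * (n.factorial:ℝ) := by
      rw [Nat.factorial_succ]; push_cast; ring
    have hcmf : (n.choose k : ℝ) * (k.factorial:ℝ) * ((n-k).factorial:ℝ) = (n.factorial:ℝ) := by
      exact_mod_cast congrArg Nat.cast (Nat.choose_mul_factorial_mul_factorial hkn)
    have hkf : (0:ℝ) < (k.factorial:ℝ) := by exact_mod_cast k.factorial_pos
    have hnkf : (0:ℝ) < ((n-k).factorial:ℝ) := by exact_mod_cast (n-k).factorial_pos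
    have hnf : (0:ℝ) < (n.factorial:ℝ) := by exact_mod_cast n.factorial_pos
    have key : (((n-k).factorial : ℝ) * (k.factorial:ℝ)) * (n.choose k : ℝ) = (n.factorial : ℝ) := by
      rw [← hcmf]; ring
    rw [hfact]
    field_simp
    linear_combination (m k) * key
  have hB : ∫ v in (0:ℝ)..1, (1-v)^n * m n = m n / ((n:ℝ) + 1) := by
    rw [intervalIntegral.integral_mul_const]
    have h0 := I_ab 0 n
    simp only [pow_zero, one_mul, Nat.factorial_zero, Nat.cast_one, zero_add] at h0
    rw [h0, Nat.factorial_succ]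
    push_cast
    have hnf : (0:ℝ) < (n.factorial:ℝ) := by exact_mod_cast n.factorial_pos
    field_simp
  have iiA : ∀ k : ℕ, IntervalIntegrable
      (fun v : ℝ => ((1-v)^k * v^(n-k) * (n.choose k : ℝ)) * m k) volume 0 1 := by
    intro k
    apply Continuous.intervalIntegrable
    fun_prop
  have hEval : ∫ v in (0:ℝ)..1,
      (p * ∑ k ∈ Finset.range (n+1), ((1-v)^k * v^(n-k) * (n.choose k : ℝ)) * m k
        + (1-p) * ((1-v)^n * m n))
      = p * ((∑ k ∈ Finset.range (n+1), m k) / ((n:ℝ)+1)) + (1-p) * (m n / ((n:ℝ)+1)) := by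
    rw [intervalIntegral.integral_add, intervalIntegral.integral_const_mul,
        intervalIntegral.integral_const_mul, intervalIntegral.integral_finset_sum (fun k _ => iiA k),
        Finset.sum_congr rfl hA, hB, ← Finset.sum_div]
    · apply Continuous.intervalIntegrable
      fun_prop
    · apply Continuous.intervalIntegrable
      fun_prop
  -- now conclude
  have : m n = p * ((∑ k ∈ Finset.range (n+1), m k) / ((n:ℝ)+1)) + (1-p) * (m n / ((n:ℝ)+1)) := by
    nth_rewrite 1 [hmain]
    rw [hEval]
  field_simp at this
  show ((n:ℝ) + p) * m n = p * ∑ k ∈ Finset.range (n+1), m k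
  linarith
lemma beta_g_recursion {p : ℝ} (hp0 : 0 < p) (hp1 : p < 1) (n : ℕ) :
    (n:ℝ) * (Real.Gamma (p + n) / (Real.Gamma p * (n.factorial : ℝ)))
      = p * ∑ k ∈ Finset.range n, Real.Gamma (p + k) / (Real.Gamma p * (k.factorial : ℝ)) := by
  induction n with
  | zero => simp
  | succ n ih =>
    have hΓp : (0:ℝ) < Real.Gamma p := Real.Gamma_pos_of_pos hp0
    have hpn : (0:ℝ) < p + n := by positivity
    have hrec : Real.Gamma (p + (n+1:ℕ)) = (p + n) * Real.Gamma (p + n) := by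
      rw [show (p + ((n:ℕ)+1:ℕ) : ℝ) = (p + n) + 1 by push_cast; ring]
      exact Real.Gamma_add_one hpn.ne'
    rw [Finset.sum_range_succ, mul_add, ← ih, hrec]
    have hnf : (0:ℝ) < (n.factorial:ℝ) := by exact_mod_cast n.factorial_pos
    have hn1f : ((n+1:ℕ).factorial : ℝ) = ((n:ℝ)+1) * (n.factorial:ℝ) := by
      rw [Nat.factorial_succ]; push_cast; ring
    rw [hn1f]
    push_cast
    field_simp
    ring

/-- for `p ∈ (0,1)`, `β(p,1−p)` is the unique probability measure `ρ` on `[0,1]`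
fixed by the transformation `ρ ↦ law of V·B + (1−V)·X` where `V` is uniform on `[0,1]`, `B` is
Bernoulli(`p`) and `X ~ ρ` are independent. -/
theorem betaMeasure_unique_fixed_point (p : ℝ) (hp : p ∈ Set.Ioo (0:ℝ) 1)
    (ρ : Measure ℝ) [IsProbabilityMeasure ρ] (hsupp : ρ (Set.Icc (0:ℝ) 1)ᶜ = 0)
    (hfix : Measure.map (fun q : ℝ × ℝ × ℝ => q.1 * q.2.1 + (1 - q.1) * q.2.2)
      ((volume.restrict (Set.Icc (0:ℝ) 1)).prod ((bernoulliMeasure p).prod ρ)) = ρ) :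
    ρ = betaMeasure p (1 - p) := by
  obtain ⟨hp0, hp1⟩ := hp
  haveI hbprob : IsProbabilityMeasure (betaMeasure p (1 - p)) := betaMeasure_isProb hp0 hp1
  apply ext_of_moments ρ (betaMeasure p (1 - p)) hsupp (betaMeasure_compl_null)
  intro n
  rw [betaMeasure_moment hp0 hp1 n]
  -- strong induction on the moments
  induction n using Nat.strong_induction_on with
  | _ n ih =>
    rcases Nat.eq_zero_or_pos n with hn | hn
    · subst hn
      have hΓp : (0:ℝ) < Real.Gamma p := Real.Gamma_pos_of_pos hp0
      simp only [pow_zero, Nat.cast_zero, add_zero, Nat.factorial_zero, Nat.cast_one, mul_one,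
        div_self hΓp.ne']
      simp
    · have hρrec := rho_recursion hp0 hp1 ρ hsupp hfix n
      have hgrec := beta_g_recursion hp0 hp1 n
      -- reduce ρ recursion : n * m n = p * ∑_{k < n} m k
      have hρrec' : (n:ℝ) * ∫ x, x ^ n ∂ρ = p * ∑ k ∈ Finset.range n, ∫ x, x ^ k ∂ρ := by
        rw [Finset.sum_range_succ] at hρrec
        linarith [hρrec]
      have hsum_eq : ∑ k ∈ Finset.range n, ∫ x, x ^ k ∂ρ
          = ∑ k ∈ Finset.range n, Real.Gamma (p + k) / (Real.Gamma p * (k.factorial : ℝ)) := by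
        refine Finset.sum_congr rfl fun k hk => ?_
        exact ih k (Finset.mem_range.mp hk)
      have hn0 : ((n:ℝ)) ≠ 0 := by
        simp only [ne_eq, Nat.cast_eq_zero]
        omega
      have := hρrec'.trans (by rw [hsum_eq, ← hgrec])
      exact mul_left_cancel₀ hn0 this
end

section
/- Let p ∈ (0,1). The pushforward of the product measure (Lebesgue measure on [0,1]) ⊗ β(p,1−p) ⊗ β(1−p,p) under the map (u, a, b) ↦ (u, u·a + (1−u)·b) is absolutely continuous with respect to Lebesgue measure on [0,1]², with density (x,y) ↦ (1/(Γ(p)²Γ(1−p)²)) · ∫_{max(x+y−1,0)}^{min(x,y)} z^{p−1} (x−z)^{−p} (y−z)^{−p} (1−x−y+z)^{p−1} dz. -/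
open MeasureTheory
open scoped ENNReal

set_option maxHeartbeats 1000000

noncomputable def dens (s t v : ℝ) (z : ℝ) : ENNReal :=
  if 0 ≤ z ∧ z ≤ v then ENNReal.ofReal (z ^ s * (v - z) ^ t) else 0

lemma dens_meas {s t : ℝ} {α : Type*} [MeasurableSpace α] {g h : α → ℝ}
    (hg : Measurable g) (hh : Measurable h) :
    Measurable (fun x => dens s t (g x) (h x)) := by
  unfold dens
  refine Measurable.ite ?_ ?_ measurable_const
  · exact (measurableSet_le measurable_const hh).inter (measurableSet_le hh hg)
  · apply ENNReal.measurable_ofReal.comp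
    apply Measurable.mul
    · exact hh.pow measurable_const
    · exact (hg.sub hh).pow measurable_const

lemma dens_scale {s t : ℝ} (hst : s + t = -1) {u : ℝ} (hu : 0 < u)
    (h : ℝ → ℝ≥0∞) (hh : Measurable h) :
    ∫⁻ a, dens s t 1 a * h (u * a) = ∫⁻ z, dens s t u z * h z := by
  have hu' : u ≠ 0 := ne_of_gt hu
  have hone : ENNReal.ofReal u⁻¹ * ENNReal.ofReal u = 1 := by
    rw [← ENNReal.ofReal_mul (inv_nonneg.2 hu.le), inv_mul_cancel₀ hu', ENNReal.ofReal_one]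
  set F : ℝ → ℝ≥0∞ := fun z => ENNReal.ofReal u⁻¹ * dens s t 1 (z / u) * h z with hF
  have hFmeas : Measurable F :=
    (measurable_const.mul (dens_meas measurable_const (measurable_id.div_const u))).mul hh
  have hkey2 : ∀ z, ENNReal.ofReal u⁻¹ * dens s t 1 (z / u) = dens s t u z := by
    intro z
    have hiff : (0 ≤ z / u ∧ z / u ≤ 1) ↔ (0 ≤ z ∧ z ≤ u) := by
      rw [div_le_one hu, le_div_iff₀ hu, zero_mul]
    unfold dens
    split_ifs with h1 h2 h2
    · rcases hiff.1 h1 with ⟨hz, hzu⟩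
      rw [← ENNReal.ofReal_mul (inv_nonneg.2 hu.le)]
      congr 1
      have hrw : z / u = z * u⁻¹ := div_eq_mul_inv z u
      have hrw2 : (1 : ℝ) - z / u = (u - z) * u⁻¹ := by field_simp
      rw [hrw2, hrw, Real.mul_rpow hz (inv_nonneg.2 hu.le),
        Real.mul_rpow (sub_nonneg.2 hzu) (inv_nonneg.2 hu.le)]
      have huu : u⁻¹ ^ s * u⁻¹ ^ t = u := by
        rw [← Real.rpow_add (inv_pos.2 hu), hst, Real.rpow_neg_one, inv_inv]
      calc u⁻¹ * (z ^ s * u⁻¹ ^ s * ((u - z) ^ t * u⁻¹ ^ t))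
          = u⁻¹ * (u⁻¹ ^ s * u⁻¹ ^ t) * (z ^ s * (u - z) ^ t) := by ring
        _ = z ^ s * (u - z) ^ t := by rw [huu, inv_mul_cancel₀ hu', one_mul]
    · exact absurd (hiff.1 h1) h2
    · exact absurd (hiff.2 h2) h1
    · rw [mul_zero]
  have key : ∀ a, dens s t 1 a * h (u * a) = F (u * a) * ENNReal.ofReal u := by
    intro a
    simp only [hF, mul_div_cancel_left₀ _ hu']
    calc dens s t 1 a * h (u * a)
        = (ENNReal.ofReal u⁻¹ * ENNReal.ofReal u) * (dens s t 1 a * h (u * a)) := by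
          rw [hone, one_mul]
      _ = ENNReal.ofReal u⁻¹ * dens s t 1 a * h (u * a) * ENNReal.ofReal u := by ring
  calc ∫⁻ a, dens s t 1 a * h (u * a)
      = ∫⁻ a, F (u * a) * ENNReal.ofReal u := by simp only [key]
    _ = (∫⁻ a, F (u * a)) * ENNReal.ofReal u :=
        lintegral_mul_const _ (hFmeas.comp (measurable_const_mul u))
    _ = (∫⁻ z, F z ∂(Measure.map (fun x => u * x) volume)) * ENNReal.ofReal u := by
        rw [lintegral_map hFmeas (measurable_const_mul u)]
    _ = (ENNReal.ofReal u⁻¹ * ∫⁻ z, F z) * ENNReal.ofReal u := by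
        rw [Real.map_volume_mul_left hu', lintegral_smul_measure, abs_of_pos (inv_pos.2 hu), smul_eq_mul]
    _ = ∫⁻ z, F z := by rw [mul_right_comm, hone, one_mul]
    _ = ∫⁻ z, dens s t u z * h z := by
        refine lintegral_congr fun z => ?_
        simp only [hF]
        rw [hkey2]

lemma integrableOn_beta {a b : ℝ} (ha : 0 < a) (hb : 0 < b) :
    IntegrableOn (fun x : ℝ => x ^ (a - 1) * (1 - x) ^ (b - 1)) (Set.Ioo 0 1) volume := by
  have hc : IntervalIntegrable
      (fun x : ℝ => (x : ℂ) ^ ((a : ℂ) - 1) * (1 - (x : ℂ)) ^ ((b : ℂ) - 1)) volume 0 1 :=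
    Complex.betaIntegral_convergent (by simpa) (by simpa)
  have h1 : IntegrableOn
      (fun x : ℝ => (x : ℂ) ^ ((a : ℂ) - 1) * (1 - (x : ℂ)) ^ ((b : ℂ) - 1))
      (Set.Ioc 0 1) volume :=
    (intervalIntegrable_iff_integrableOn_Ioc_of_le zero_le_one).1 hc
  have h1n : IntegrableOn
      (fun x : ℝ => ‖(x : ℂ) ^ ((a : ℂ) - 1) * (1 - (x : ℂ)) ^ ((b : ℂ) - 1)‖)
      (Set.Ioc 0 1) volume := h1.norm
  have h2 := h1n.mono_set Set.Ioo_subset_Ioc_self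
  refine h2.congr_fun (fun x hx => ?_) measurableSet_Ioo
  rcases hx with ⟨hx0, hx1⟩
  beta_reduce
  rw [norm_mul]
  have e1 : ‖(x : ℂ) ^ ((a : ℂ) - 1)‖ = x ^ (a - 1) := by
    rw [Complex.norm_cpow_eq_rpow_re_of_pos hx0]
    simp
  have e2 : ‖(1 - (x : ℂ)) ^ ((b : ℂ) - 1)‖ = (1 - x) ^ (b - 1) := by
    have : (1 : ℂ) - (x : ℂ) = ((1 - x : ℝ) : ℂ) := by push_cast; ring
    rw [this, Complex.norm_cpow_eq_rpow_re_of_pos (by linarith)]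
    simp
  rw [e1, e2]

lemma betaMeasure_finite {a b : ℝ} (ha : 0 < a) (hb : 0 < b) :
    IsFiniteMeasure (betaMeasure a b) := by
  constructor
  rw [betaMeasure, withDensity_apply _ MeasurableSet.univ, Measure.restrict_univ]
  have hInt : IntegrableOn
      (fun x : ℝ => x ^ (a - 1) * (1 - x) ^ (b - 1) / (Real.Gamma a * Real.Gamma b))
      (Set.Icc 0 1) volume := by
    rw [IntegrableOn, ← Measure.restrict_congr_set Ioo_ae_eq_Icc]
    exact (integrableOn_beta ha hb).div_const _
  exact hInt.lintegral_lt_top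

/-- for `p ∈ (0,1)`, the pushforward of `Leb[0,1] ⊗ β(p,1−p) ⊗ β(1−p,p)` under
`(u,a,b) ↦ (u, u·a + (1−u)·b)` is absolutely continuous with respect to Lebesgue measure on
the square, with density
`(x,y) ↦ (1/(Γ(p)²Γ(1−p)²)) ∫_{max(x+y−1,0)}^{min(x,y)} z^{p−1}(x−z)^{−p}(y−z)^{−p}(1−x−y+z)^{p−1} dz`. -/
theorem intensity_measure_density (p : ℝ) (hp : p ∈ Set.Ioo (0:ℝ) 1) :
    Measure.map (fun q : ℝ × ℝ × ℝ => (q.1, q.1 * q.2.1 + (1 - q.1) * q.2.2))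
      ((volume.restrict (Set.Icc (0:ℝ) 1)).prod
        ((betaMeasure p (1 - p)).prod (betaMeasure (1 - p) p))) =
    (volume : Measure (ℝ × ℝ)).withDensity (fun z =>
      ENNReal.ofReal ((1 / (Real.Gamma p ^ 2 * Real.Gamma (1 - p) ^ 2)) *
        ∫ t in Set.Ioc (max (z.1 + z.2 - 1) 0) (min z.1 z.2),
          t ^ (p - 1) * (z.1 - t) ^ (-p) * (z.2 - t) ^ (-p) *
            (1 - z.1 - z.2 + t) ^ (p - 1))) := by
  obtain ⟨hp0, hp1⟩ := hp
  have hp1' : (0:ℝ) < 1 - p := by linarith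
  have hG : 0 < Real.Gamma p * Real.Gamma (1 - p) :=
    mul_pos (Real.Gamma_pos_of_pos hp0) (Real.Gamma_pos_of_pos hp1')
  set G : ℝ := Real.Gamma p * Real.Gamma (1 - p) with hGdef
  set C : ℝ≥0∞ := ENNReal.ofReal (1 / G) with hCdef
  set T : ℝ × ℝ × ℝ → ℝ × ℝ := fun q => (q.1, q.1 * q.2.1 + (1 - q.1) * q.2.2) with hTdef
  have hTmeas : Measurable T := by fun_prop
  set ν : Measure ℝ := volume.restrict (Set.Icc (0:ℝ) 1) with hνdef
  haveI hβ1fin : IsFiniteMeasure (betaMeasure p (1 - p)) := betaMeasure_finite hp0 hp1'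
  haveI hβ2fin : IsFiniteMeasure (betaMeasure (1 - p) p) := betaMeasure_finite hp1' hp0
  haveI hνfin : IsFiniteMeasure ν := by
    constructor
    rw [hνdef, Measure.restrict_apply_univ, Real.volume_Icc]
    simp
  set Φ : ℝ × ℝ → ℝ≥0∞ := fun q =>
    ∫⁻ z, dens (p-1) (-p) q.1 z * dens (-p) (p-1) (1 - q.1) (q.2 - z) with hΦdef
  have hΦmeas : Measurable Φ := by
    apply Measurable.lintegral_prod_right
      (f := fun (q : ℝ × ℝ) (z : ℝ) => dens (p-1) (-p) q.1 z * dens (-p) (p-1) (1 - q.1) (q.2 - z))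
    exact (dens_meas measurable_fst.fst measurable_snd).mul
      (dens_meas (measurable_const.sub measurable_fst.fst) (measurable_fst.snd.sub measurable_snd))
  set ρ : ℝ × ℝ → ℝ≥0∞ := fun q => if q.1 ∈ Set.Ioo (0:ℝ) 1 then (C * C) * Φ q else 0 with hρdef
  have hρmeas : Measurable ρ := by
    refine Measurable.ite ?_ (measurable_const.mul hΦmeas) measurable_const
    exact measurable_fst measurableSet_Ioo
  have hρ_pos : ∀ (u y : ℝ), u ∈ Set.Ioo (0:ℝ) 1 → ρ (u, y) = (C * C) * Φ (u, y) := by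
    intro u y hu
    rw [hρdef]
    exact if_pos hu
  have hρ_neg : ∀ (u y : ℝ), u ∉ Set.Ioo (0:ℝ) 1 → ρ (u, y) = 0 := by
    intro u y hu
    rw [hρdef]
    exact if_neg hu
  -- densities of the beta measures
  set D1 : ℝ → ℝ≥0∞ := fun x =>
    ENNReal.ofReal (x ^ (p - 1) * (1 - x) ^ (1 - p - 1) / (Real.Gamma p * Real.Gamma (1 - p)))
    with hD1def
  set D2 : ℝ → ℝ≥0∞ := fun x =>
    ENNReal.ofReal (x ^ (1 - p - 1) * (1 - x) ^ (p - 1) / (Real.Gamma (1 - p) * Real.Gamma p))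
    with hD2def
  have hD1meas : Measurable D1 := by
    apply ENNReal.measurable_ofReal.comp
    apply Measurable.div_const
    exact (measurable_id.pow measurable_const).mul
      ((measurable_const.sub measurable_id).pow measurable_const)
  have hD2meas : Measurable D2 := by
    apply ENNReal.measurable_ofReal.comp
    apply Measurable.div_const
    exact (measurable_id.pow measurable_const).mul
      ((measurable_const.sub measurable_id).pow measurable_const)
  have hβ1 : betaMeasure p (1 - p) = ν.withDensity D1 := rfl
  have hβ2 : betaMeasure (1 - p) p = ν.withDensity D2 := rfl
  -- density conversion pointwise
  have hD1dens : ∀ a : ℝ, (Set.Icc (0:ℝ) 1).indicator D1 a = C * dens (p-1) (-p) 1 a := by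
    intro a
    rw [Set.indicator_apply]
    unfold dens
    split_ifs with h1 h2 h2
    · rw [hD1def, hCdef]
      simp only
      rw [← ENNReal.ofReal_mul (by positivity)]
      congr 1
      rw [show (1:ℝ) - p - 1 = -p from by ring, hGdef]
      ring
    · exact absurd (Set.mem_Icc.1 h1) h2
    · exact absurd (Set.mem_Icc.2 h2) h1
    · rw [mul_zero]
  have hD2dens : ∀ a : ℝ, (Set.Icc (0:ℝ) 1).indicator D2 a = C * dens (-p) (p-1) 1 a := by
    intro a
    rw [Set.indicator_apply]
    unfold dens
    split_ifs with h1 h2 h2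
    · rw [hD2def, hCdef]
      simp only
      rw [← ENNReal.ofReal_mul (by positivity)]
      congr 1
      rw [show (1:ℝ) - p - 1 = -p from by ring, hGdef]
      ring
    · exact absurd (Set.mem_Icc.1 h1) h2
    · exact absurd (Set.mem_Icc.2 h2) h1
    · rw [mul_zero]
  have main : Measure.map T (ν.prod ((betaMeasure p (1 - p)).prod (betaMeasure (1 - p) p))) =
      (volume : Measure (ℝ × ℝ)).withDensity ρ := by
    ext s hs
    rw [Measure.map_apply hTmeas hs, withDensity_apply _ hs]
    set I : ℝ × ℝ → ℝ≥0∞ := s.indicator (fun _ => 1) with hIdef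
    have hImeas : Measurable I := measurable_const.indicator hs
    have hindmeas : Measurable ((T ⁻¹' s).indicator (fun _ => (1:ℝ≥0∞))) :=
      measurable_const.indicator (hTmeas hs)
    have hindic : ∀ q : ℝ × ℝ × ℝ, (T ⁻¹' s).indicator (fun _ => (1:ℝ≥0∞)) q = I (T q) := by
      intro q
      by_cases hmem : T q ∈ s
      · rw [hIdef, Set.indicator_of_mem (Set.mem_preimage.2 hmem), Set.indicator_of_mem hmem]
      · rw [hIdef, Set.indicator_of_notMem (fun c => hmem (Set.mem_preimage.1 c)),
          Set.indicator_of_notMem hmem]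
    -- step 2 : per-u computation
    have step2 : ∀ u ∈ Set.Ioo (0:ℝ) 1,
        (∫⁻ a, (∫⁻ b, I (u, u * a + (1 - u) * b) ∂(betaMeasure (1 - p) p))
          ∂(betaMeasure p (1 - p)))
        = (C * C) * ∫⁻ y, I (u, y) * Φ (u, y) := by
      intro u hu
      have hu0 : 0 < u := hu.1
      have hu1 : 0 < 1 - u := by linarith [hu.2]
      set H : ℝ → ℝ≥0∞ := fun z => ∫⁻ w, dens (-p) (p-1) (1-u) w * I (u, z + w) with hHdef
      have hHmeas : Measurable H := by
        apply Measurable.lintegral_prod_right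
          (f := fun (z : ℝ) (w : ℝ) => dens (-p) (p-1) (1-u) w * I (u, z + w))
        exact (dens_meas measurable_const measurable_snd).mul
          (hImeas.comp (measurable_const.prodMk (measurable_fst.add measurable_snd)))
      have inner : ∀ a : ℝ,
          (∫⁻ b, I (u, u * a + (1 - u) * b) ∂(betaMeasure (1 - p) p)) = C * H (u * a) := by
        intro a
        have hginner : Measurable (fun b : ℝ => I (u, u * a + (1 - u) * b)) :=
          hImeas.comp (measurable_const.prodMk (measurable_const.add
            (measurable_const.mul measurable_id)))
        rw [hβ2, lintegral_withDensity_eq_lintegral_mul ν hD2meas hginner, hνdef,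
          ← lintegral_indicator measurableSet_Icc]
        have hpt : ∀ b : ℝ, (Set.Icc (0:ℝ) 1).indicator
            (D2 * fun b => I (u, u * a + (1 - u) * b)) b
            = C * (dens (-p) (p-1) 1 b * I (u, u * a + (1 - u) * b)) := by
          intro b
          have : (Set.Icc (0:ℝ) 1).indicator (D2 * fun b => I (u, u * a + (1 - u) * b)) b
              = (Set.Icc (0:ℝ) 1).indicator D2 b * I (u, u * a + (1 - u) * b) := by
            rw [Set.indicator_apply, Set.indicator_apply]
            split_ifs with h
            · rfl
            · rw [zero_mul]
          rw [this, hD2dens, mul_assoc]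
        have hm1 : Measurable (fun b : ℝ => dens (-p) (p-1) 1 b * I (u, u * a + (1 - u) * b)) := by
          exact (dens_meas measurable_const measurable_id).mul hginner
        rw [lintegral_congr hpt, lintegral_const_mul C hm1]
        congr 1
        have := dens_scale (show (-p) + (p-1) = -1 by ring) hu1
          (fun w => I (u, u * a + w))
          (hImeas.comp (measurable_const.prodMk (measurable_const.add measurable_id)))
        exact this
      have htrans : ∀ z, H z = ∫⁻ y, dens (-p) (p-1) (1-u) (y - z) * I (u, y) := by
        intro z
        rw [hHdef]
        simp only
        rw [← lintegral_add_left_eq_self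
          (fun y => dens (-p) (p-1) (1-u) (y - z) * I (u, y)) z]
        refine lintegral_congr fun w => ?_
        simp only [add_sub_cancel_left]
      have hswapmeas : AEMeasurable (Function.uncurry fun z y =>
          dens (p-1) (-p) u z * (dens (-p) (p-1) (1-u) (y - z) * I (u, y)))
          ((volume : Measure ℝ).prod volume) := by
        apply Measurable.aemeasurable
        apply Measurable.mul
        · exact dens_meas measurable_const measurable_fst
        · exact (dens_meas measurable_const (measurable_snd.sub measurable_fst)).mul
            (hImeas.comp (measurable_const.prodMk measurable_snd))
      calc (∫⁻ a, (∫⁻ b, I (u, u * a + (1 - u) * b) ∂(betaMeasure (1 - p) p))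
            ∂(betaMeasure p (1 - p)))
          = ∫⁻ a, C * H (u * a) ∂(betaMeasure p (1 - p)) := lintegral_congr inner
        _ = ∫⁻ a, (Set.Icc (0:ℝ) 1).indicator (D1 * fun a => C * H (u * a)) a := by
            have hg1 : Measurable (fun a : ℝ => C * H (u * a)) := by
              exact measurable_const.mul (hHmeas.comp (measurable_const_mul u))
            rw [hβ1, lintegral_withDensity_eq_lintegral_mul ν hD1meas hg1, hνdef,
              ← lintegral_indicator measurableSet_Icc]
        _ = ∫⁻ a, (C * C) * (dens (p-1) (-p) 1 a * H (u * a)) := by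
            refine lintegral_congr fun a => ?_
            have : (Set.Icc (0:ℝ) 1).indicator (D1 * fun a => C * H (u * a)) a
                = (Set.Icc (0:ℝ) 1).indicator D1 a * (C * H (u * a)) := by
              rw [Set.indicator_apply, Set.indicator_apply]
              split_ifs with h
              · rfl
              · rw [zero_mul]
            rw [this, hD1dens]
            ring
        _ = (C * C) * ∫⁻ a, dens (p-1) (-p) 1 a * H (u * a) := by
            have hm2 : Measurable (fun a : ℝ => dens (p-1) (-p) 1 a * H (u * a)) := by
              exact (dens_meas measurable_const measurable_id).mul
                (hHmeas.comp (measurable_const_mul u))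
            rw [lintegral_const_mul (C * C) hm2]
        _ = (C * C) * ∫⁻ z, dens (p-1) (-p) u z * H z := by
            rw [dens_scale (show (p-1) + (-p) = -1 by ring) hu0 H hHmeas]
        _ = (C * C) * ∫⁻ z, ∫⁻ y, dens (p-1) (-p) u z *
              (dens (-p) (p-1) (1-u) (y - z) * I (u, y)) := by
            congr 1
            refine lintegral_congr fun z => ?_
            have hm3 : Measurable (fun y : ℝ => dens (-p) (p-1) (1-u) (y - z) * I (u, y)) := by
              exact (dens_meas measurable_const (measurable_id.sub_const z)).mul
                (hImeas.comp (measurable_const.prodMk measurable_id))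
            rw [htrans z, ← lintegral_const_mul (dens (p-1) (-p) u z) hm3]
        _ = (C * C) * ∫⁻ y, ∫⁻ z, dens (p-1) (-p) u z *
              (dens (-p) (p-1) (1-u) (y - z) * I (u, y)) := by
            rw [lintegral_lintegral_swap hswapmeas]
        _ = (C * C) * ∫⁻ y, I (u, y) * Φ (u, y) := by
            congr 1
            refine lintegral_congr fun y => ?_
            have h1 : ∀ z, dens (p-1) (-p) u z * (dens (-p) (p-1) (1-u) (y - z) * I (u, y))
                = (dens (p-1) (-p) u z * dens (-p) (p-1) (1-u) (y - z)) * I (u, y) := by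
              intro z; ring
            have hm4 : Measurable (fun z : ℝ => dens (p-1) (-p) u z * dens (-p) (p-1) (1-u) (y - z)) := by
              exact (dens_meas measurable_const measurable_id).mul
                (dens_meas measurable_const (measurable_const.sub measurable_id))
            rw [lintegral_congr h1, lintegral_mul_const _ hm4, mul_comm]
    -- assembling
    calc (ν.prod ((betaMeasure p (1 - p)).prod (betaMeasure (1 - p) p))) (T ⁻¹' s)
        = ∫⁻ q, (T ⁻¹' s).indicator (fun _ => (1:ℝ≥0∞)) q
            ∂(ν.prod ((betaMeasure p (1 - p)).prod (betaMeasure (1 - p) p))) :=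
          (lintegral_indicator_one (hTmeas hs)).symm
      _ = ∫⁻ u, ∫⁻ r, (T ⁻¹' s).indicator (fun _ => (1:ℝ≥0∞)) (u, r)
            ∂((betaMeasure p (1 - p)).prod (betaMeasure (1 - p) p)) ∂ν :=
          lintegral_prod _ hindmeas.aemeasurable
      _ = ∫⁻ u, ∫⁻ a, ∫⁻ b, I (u, u * a + (1 - u) * b)
            ∂(betaMeasure (1 - p) p) ∂(betaMeasure p (1 - p)) ∂ν := by
          refine lintegral_congr fun u => ?_
          have hm5 : Measurable (fun r : ℝ × ℝ =>
              (T ⁻¹' s).indicator (fun _ => (1:ℝ≥0∞)) (u, r)) := by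
            exact hindmeas.comp measurable_prodMk_left
          rw [lintegral_prod _ hm5.aemeasurable]
          refine lintegral_congr fun a => lintegral_congr fun b => ?_
          exact hindic (u, (a, b))
      _ = ∫⁻ u in Set.Ioo (0:ℝ) 1, ∫⁻ a, ∫⁻ b, I (u, u * a + (1 - u) * b)
            ∂(betaMeasure (1 - p) p) ∂(betaMeasure p (1 - p)) ∂volume := by
          rw [hνdef, ← Measure.restrict_congr_set Ioo_ae_eq_Icc]
      _ = ∫⁻ u in Set.Ioo (0:ℝ) 1, (C * C) * ∫⁻ y, I (u, y) * Φ (u, y) ∂volume := by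
          refine setLIntegral_congr_fun measurableSet_Ioo
            (fun u hu => step2 u hu)
      _ = ∫⁻ u, (Set.Ioo (0:ℝ) 1).indicator
            (fun u => (C * C) * ∫⁻ y, I (u, y) * Φ (u, y)) u ∂volume := by
          rw [lintegral_indicator measurableSet_Ioo]
      _ = ∫⁻ u, ∫⁻ y, I (u, y) * ρ (u, y) ∂volume ∂volume := by
          refine lintegral_congr fun u => ?_
          rw [Set.indicator_apply]
          by_cases hu : u ∈ Set.Ioo (0:ℝ) 1
          · have hm6 : Measurable (fun y : ℝ => I (u, y) * Φ (u, y)) := by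
              exact (hImeas.comp measurable_prodMk_left).mul
                (hΦmeas.comp measurable_prodMk_left)
            rw [if_pos hu, ← lintegral_const_mul (C * C) hm6]
            refine lintegral_congr fun y => ?_
            rw [hρ_pos u y hu]
            ring
          · rw [if_neg hu]
            have hz : ∀ y : ℝ, I (u, y) * ρ (u, y) = 0 := by
              intro y
              rw [hρ_neg u y hu, mul_zero]
            rw [lintegral_congr hz, lintegral_zero]
      _ = ∫⁻ q, I q * ρ q ∂(volume : Measure (ℝ × ℝ)) := by
          rw [Measure.volume_eq_prod, lintegral_prod (fun q => I q * ρ q)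
            ((hImeas.mul hρmeas).aemeasurable)]
      _ = ∫⁻ q, s.indicator ρ q ∂(volume : Measure (ℝ × ℝ)) := by
          refine lintegral_congr fun q => ?_
          by_cases h : q ∈ s
          · rw [hIdef, Set.indicator_of_mem h, Set.indicator_of_mem h, one_mul]
          · rw [hIdef, Set.indicator_of_notMem h, Set.indicator_of_notMem h, zero_mul]
      _ = ∫⁻ q in s, ρ q ∂(volume : Measure (ℝ × ℝ)) := lintegral_indicator hs ρ
  refine main.trans (withDensity_congr_ae ?_)
  have hfin : ∫⁻ q, ρ q ∂(volume : Measure (ℝ × ℝ)) ≠ ⊤ := by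
    have h1 : ∫⁻ q, ρ q ∂(volume : Measure (ℝ × ℝ)) =
        ((volume : Measure (ℝ × ℝ)).withDensity ρ) Set.univ := by
      rw [withDensity_apply _ MeasurableSet.univ, Measure.restrict_univ]
    rw [h1, ← main, Measure.map_apply hTmeas MeasurableSet.univ, Set.preimage_univ]
    exact measure_ne_top _ _
  have hae : ∀ᵐ q ∂(volume : Measure (ℝ × ℝ)), ρ q < ⊤ := ae_lt_top hρmeas hfin
  filter_upwards [hae] with q hq
  by_cases hq1 : q.1 ∈ Set.Ioo (0:ℝ) 1
  · -- main pointwise computation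
    set x := q.1 with hxdef
    set y := q.2 with hydef
    set z0 := max (x + y - 1) 0 with hz0def
    set z1 := min x y with hz1def
    set g : ℝ → ℝ := fun z =>
      z ^ (p-1) * (x - z) ^ (-p) * (y - z) ^ (-p) * (1 - x - y + z) ^ (p-1) with hgdef
    have hx0 : 0 < x := hq1.1
    have hx1 : x < 1 := hq1.2
    have hiff : ∀ z, z ∈ Set.Icc z0 z1 ↔ ((0 ≤ z ∧ z ≤ x) ∧ (0 ≤ y - z ∧ y - z ≤ 1 - x)) := by
      intro z
      rw [Set.mem_Icc, hz0def, hz1def, max_le_iff, le_min_iff]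
      constructor
      · rintro ⟨⟨a, b⟩, ⟨c, d⟩⟩
        exact ⟨⟨b, c⟩, ⟨by linarith, by linarith⟩⟩
      · rintro ⟨⟨a, b⟩, ⟨c, d⟩⟩
        exact ⟨⟨by linarith, a⟩, ⟨b, by linarith⟩⟩
    have claim1 : Φ q = ∫⁻ z in Set.Ioc z0 z1, ENNReal.ofReal (g z) := by
      have hpt : ∀ z, dens (p-1) (-p) x z * dens (-p) (p-1) (1 - x) (y - z)
          = (Set.Icc z0 z1).indicator (fun z => ENNReal.ofReal (g z)) z := by
        intro z
        rw [Set.indicator_apply]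
        unfold dens
        rcases em ((0 ≤ z ∧ z ≤ x) ∧ (0 ≤ y - z ∧ y - z ≤ 1 - x)) with h | h
        · rw [if_pos h.1, if_pos h.2, if_pos ((hiff z).2 h)]
          rw [← ENNReal.ofReal_mul
            (mul_nonneg (Real.rpow_nonneg h.1.1 _) (Real.rpow_nonneg (by linarith [h.1.2]) _))]
          congr 1
          rw [hgdef]
          simp only
          rw [show (1:ℝ) - x - (y - z) = 1 - x - y + z from by ring]
          ring
        · rw [if_neg (fun c => h ((hiff z).1 c))]
          rcases not_and_or.1 h with h' | h'
          · rw [if_neg h', zero_mul]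
          · rw [if_neg h', mul_zero]
      rw [hΦdef]
      simp only
      rw [lintegral_congr hpt, lintegral_indicator measurableSet_Icc,
        ← Measure.restrict_congr_set Ioc_ae_eq_Icc]
    have hCC0 : C * C ≠ 0 := by
      rw [hCdef]
      have h0 : ENNReal.ofReal (1 / G) ≠ 0 := by
        simp only [ne_eq, ENNReal.ofReal_eq_zero, not_le]
        positivity
      exact mul_ne_zero h0 h0
    have hΦfin : Φ q ≠ ⊤ := by
      intro htop
      rw [hρdef] at hq
      simp only [if_pos (show q.1 ∈ Set.Ioo (0:ℝ) 1 from hq1), htop, ENNReal.mul_top hCC0, lt_self_iff_false] at hq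
    have claim2 : ∫ t in Set.Ioc z0 z1, g t
        = (∫⁻ t in Set.Ioc z0 z1, ENNReal.ofReal (g t)).toReal := by
      apply integral_eq_lintegral_of_nonneg_ae
      · refine (ae_restrict_iff' measurableSet_Ioc).2 (Filter.Eventually.of_forall fun z hz => ?_)
        have h0z : (0:ℝ) ≤ z := le_of_lt (lt_of_le_of_lt (le_max_right _ 0) hz.1)
        have hzx : z ≤ x := hz.2.trans (min_le_left _ _)
        have hzy : z ≤ y := hz.2.trans (min_le_right _ _)
        have hxyz : 0 ≤ 1 - x - y + z := by
          linarith [le_max_left (x + y - 1) (0:ℝ), hz.1.le]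
        rw [hgdef]
        simp only [Pi.zero_apply]
        have := Real.rpow_nonneg h0z (p-1)
        have := Real.rpow_nonneg (sub_nonneg.2 hzx) (-p)
        have := Real.rpow_nonneg (sub_nonneg.2 hzy) (-p)
        have := Real.rpow_nonneg hxyz (p-1)
        positivity
      · apply Measurable.aestronglyMeasurable
        rw [hgdef]
        apply Measurable.mul
        apply Measurable.mul
        apply Measurable.mul
        · exact measurable_id.pow measurable_const
        · exact (measurable_const.sub measurable_id).pow measurable_const
        · exact (measurable_const.sub measurable_id).pow measurable_const
        · exact (measurable_const.add measurable_id).pow measurable_const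
    have hCC : ENNReal.ofReal (1 / (Real.Gamma p ^ 2 * Real.Gamma (1 - p) ^ 2)) = C * C := by
      rw [hCdef, ← ENNReal.ofReal_mul (by positivity)]
      congr 1
      rw [hGdef]
      field_simp
    calc ρ q = (C * C) * Φ q := by rw [hρdef]; simp only [if_pos (show q.1 ∈ Set.Ioo (0:ℝ) 1 from hq1)]
      _ = ENNReal.ofReal (1 / (Real.Gamma p ^ 2 * Real.Gamma (1 - p) ^ 2)) *
          ENNReal.ofReal ((∫⁻ t in Set.Ioc z0 z1, ENNReal.ofReal (g t)).toReal) := by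
          rw [hCC, claim1, ENNReal.ofReal_toReal (claim1 ▸ hΦfin)]
      _ = ENNReal.ofReal ((1 / (Real.Gamma p ^ 2 * Real.Gamma (1 - p) ^ 2)) *
          ∫ t in Set.Ioc z0 z1, g t) := by
          rw [← claim2, ← ENNReal.ofReal_mul (by positivity)]
  · rw [hρdef]
    simp only [if_neg hq1]
    symm
    have hempty : Set.Ioc (max (q.1 + q.2 - 1) 0) (min q.1 q.2) = ∅ := by
      rw [Set.Ioc_eq_empty_iff]
      intro hlt
      rw [Set.mem_Ioo, not_and_or, not_lt, not_lt] at hq1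
      rcases hq1 with h | h
      · exact absurd hlt (not_lt.2 ((min_le_left _ _).trans (h.trans (le_max_right _ _))))
      · have h2 : min q.1 q.2 ≤ q.2 := min_le_right _ _
        have h3 : min q.1 q.2 ≤ max (q.1 + q.2 - 1) 0 :=
          le_trans h2 (le_trans (by linarith) (le_max_left _ _))
        exact absurd hlt (not_lt.2 h3)
    rw [hempty]
    simp
end
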